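/- arXiv:2007.04046 — 6 statements merged into one kernel-verified Lean document; each statement's English description precedes it below -/
import Mathlib

section
/- In the universal central extension 𝒢̃ of the planar Galilean conformal algebra, the center of 𝒢̃ equals the span of C_1, C_2, C_3. -/
/-- Basis indices for the universal central extension of the planar Galilean
conformal algebra. -/
inductive GtIdx : Type
  | L : ℤ → GtIdx
  | H : ℤ → GtIdx
  | I : ℤ → GtIdx
  | J : ℤ → GtIdx
  | C1 : GtIdx
  | C2 : GtIdx
  | C3 : GtIdx

open GtIdx in
/-- `IsPGCAExt b` says that the Lie algebra `G` together with the basis `b` indexed by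
`GtIdx` realizes the universal central extension of the planar Galilean conformal algebra:
the basis elements satisfy the defining bracket relations (with the central terms involving
`C1, C2, C3`), the elements `C1, C2, C3` are central, and all other brackets among basis
elements vanish. -/
structure IsPGCAExt (G : Type*) [LieRing G] [LieAlgebra ℂ G] (b : Module.Basis GtIdx ℂ G) : Prop where
  lie_LL : ∀ n m : ℤ, ⁅b (L n), b (L m)⁆ = ((m : ℂ) - n) • b (L (m + n))
    + (if m + n = 0 then (n : ℂ) ^ 3 else 0) • b C1
  lie_LH : ∀ n m : ℤ, ⁅b (L n), b (H m)⁆ = (m : ℂ) • b (H (m + n))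
    + (if m + n = 0 then (n : ℂ) ^ 2 else 0) • b C2
  lie_HH : ∀ n m : ℤ, ⁅b (H n), b (H m)⁆ = (if m + n = 0 then (n : ℂ) else 0) • b C3
  lie_LI : ∀ n m : ℤ, ⁅b (L n), b (I m)⁆ = ((m : ℂ) - n) • b (I (m + n))
  lie_LJ : ∀ n m : ℤ, ⁅b (L n), b (J m)⁆ = ((m : ℂ) - n) • b (J (m + n))
  lie_HI : ∀ n m : ℤ, ⁅b (H n), b (I m)⁆ = b (I (m + n))
  lie_HJ : ∀ n m : ℤ, ⁅b (H n), b (J m)⁆ = - b (J (m + n))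
  lie_II : ∀ n m : ℤ, ⁅b (I n), b (I m)⁆ = 0
  lie_IJ : ∀ n m : ℤ, ⁅b (I n), b (J m)⁆ = 0
  lie_JJ : ∀ n m : ℤ, ⁅b (J n), b (J m)⁆ = 0
  lie_C1 : ∀ x : G, ⁅b C1, x⁆ = 0
  lie_C2 : ∀ x : G, ⁅b C2, x⁆ = 0
  lie_C3 : ∀ x : G, ⁅b C3, x⁆ = 0

open GtIdx in
private lemma pgca_key {G : Type*} [LieRing G] [LieAlgebra ℂ G] (b : Module.Basis GtIdx ℂ G)
    (g : G) (j : GtIdx) (φ : G →ₗ[ℂ] ℂ)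
    (h : ∀ k, b.repr ⁅g, b k⁆ j = φ (b k)) {z : G} (hz : ⁅g, z⁆ = 0) :
    φ z = 0 := by
  have h2 : ((Finsupp.lapply j : (GtIdx →₀ ℂ) →ₗ[ℂ] ℂ).comp
      (b.repr.toLinearMap.comp (LieAlgebra.ad ℂ G g))) = φ := b.ext h
  rw [← h2]
  simp [LieAlgebra.ad_apply, hz]

/-- The center of the universal central extension `𝒢̃` of the planar Galilean conformal
algebra equals the span of `C1, C2, C3`. -/
theorem pgcaExt_center {G : Type*} [LieRing G] [LieAlgebra ℂ G]
    (b : Module.Basis GtIdx ℂ G) (hb : IsPGCAExt G b) :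
    (LieAlgebra.center ℂ G : Submodule ℂ G)
      = Submodule.span ℂ {b GtIdx.C1, b GtIdx.C2, b GtIdx.C3} := by
  open GtIdx in
  apply le_antisymm
  · intro z hz0
    have hz0' : z ∈ LieAlgebra.center ℂ G := hz0
    have hz : ∀ x : G, ⁅x, z⁆ = 0 := (LieModule.mem_maxTrivSubmodule ℂ G G z).mp hz0'
    -- coordinate functionals
    set φc : GtIdx → (G →ₗ[ℂ] ℂ) :=
      fun j => (Finsupp.lapply j : (GtIdx →₀ ℂ) →ₗ[ℂ] ℂ).comp b.repr.toLinearMap with hφc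
    have φc_apply : ∀ (j : GtIdx) (x : G), φc j x = b.repr x j := fun _ _ => rfl
    -- brackets with central elements vanish
    have hC1' : ∀ x : G, ⁅x, b C1⁆ = 0 := fun x => by rw [← lie_skew, hb.lie_C1, neg_zero]
    have hC2' : ∀ x : G, ⁅x, b C2⁆ = 0 := fun x => by rw [← lie_skew, hb.lie_C2, neg_zero]
    have hC3' : ∀ x : G, ⁅x, b C3⁆ = 0 := fun x => by rw [← lie_skew, hb.lie_C3, neg_zero]
    -- H 0 acts diagonally
    have hHL : ∀ p : ℤ, ⁅b (H 0), b (L p)⁆ = 0 := by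
      intro p
      rw [← lie_skew, hb.lie_LH]
      rcases eq_or_ne p 0 with rfl | hp
      · simp
      · simp [hp]
    have hHH : ∀ p : ℤ, ⁅b (H 0), b (H p)⁆ = 0 := by
      intro p
      rw [hb.lie_HH]
      rcases eq_or_ne p 0 with rfl | hp
      · simp
      · simp [hp]
    -- kill I coefficients
    have hI : ∀ m : ℤ, b.repr z (I m) = 0 := by
      intro m
      have h := pgca_key b (b (H 0)) (I m) (φc (I m)) ?_ (hz (b (H 0)))
      · simpa [φc_apply] using h
      · intro k
        cases k with
        | L p => simp [hHL, φc_apply]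
        | H p => simp [hHH, φc_apply]
        | I p => simp [hb.lie_HI, φc_apply]
        | J p => simp [hb.lie_HJ, φc_apply]
        | C1 => simp [hC1', φc_apply]
        | C2 => simp [hC2', φc_apply]
        | C3 => simp [hC3', φc_apply]
    -- kill J coefficients
    have hJ : ∀ m : ℤ, b.repr z (J m) = 0 := by
      intro m
      have h := pgca_key b (b (H 0)) (J m) (-(φc (J m))) ?_ (hz (b (H 0)))
      · simpa [φc_apply, neg_eq_zero] using h
      · intro k
        cases k with
        | L p => simp [hHL, φc_apply]
        | H p => simp [hHH, φc_apply]
        | I p => simp [hb.lie_HI, φc_apply]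
        | J p => simp [hb.lie_HJ, φc_apply, Finsupp.single_apply]
        | C1 => simp [hC1', φc_apply]
        | C2 => simp [hC2', φc_apply]
        | C3 => simp [hC3', φc_apply]
    -- kill H coefficients, m ≠ 0
    have hH : ∀ m : ℤ, m ≠ 0 → b.repr z (H m) = 0 := by
      intro m hm
      have h := pgca_key b (b (L 1)) (H (m + 1)) ((m : ℂ) • φc (H m)) ?_ (hz (b (L 1)))
      · have hm' : (m : ℂ) ≠ 0 := Int.cast_ne_zero.mpr hm
        simpa [φc_apply, hm', mul_eq_zero] using h
      · intro k
        cases k with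
        | L p =>
          rw [hb.lie_LL]
          rcases eq_or_ne (p + 1) 0 with hp | hp <;> simp [hp, φc_apply]
        | H p =>
          rw [hb.lie_LH]
          by_cases hpm : p = m
          · subst hpm
            rcases eq_or_ne (p + 1) 0 with hp1 | hp1 <;>
              simp [hp1, φc_apply, Finsupp.single_apply]
          · rcases eq_or_ne (p + 1) 0 with hp1 | hp1
            · simp [hp1, φc_apply, Finsupp.single_apply, hpm,
                show ¬((0 : ℤ) = m + 1) from by omega]
            · simp [hp1, φc_apply, Finsupp.single_apply, hpm,
                show ¬(p + 1 = m + 1) from by omega]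
        | I p => simp [hb.lie_LI, φc_apply]
        | J p => simp [hb.lie_LJ, φc_apply]
        | C1 => simp [hC1', φc_apply]
        | C2 => simp [hC2', φc_apply]
        | C3 => simp [hC3', φc_apply]
    -- kill L coefficients
    have hLgen : ∀ c : ℤ, ∀ m : ℤ, ((m : ℂ) - c) * b.repr z (L m) = 0 := by
      intro c m
      have h := pgca_key b (b (L c)) (L (m + c)) (((m : ℂ) - c) • φc (L m)) ?_ (hz (b (L c)))
      · simpa [φc_apply] using h
      · intro k
        cases k with
        | L p =>
          rw [hb.lie_LL]
          by_cases hpm : p = m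
          · subst hpm
            rcases eq_or_ne (p + c) 0 with hp1 | hp1 <;>
              simp [hp1, φc_apply, Finsupp.single_apply]
          · rcases eq_or_ne (p + c) 0 with hp1 | hp1
            · simp [hp1, φc_apply, Finsupp.single_apply, hpm,
                show ¬((0 : ℤ) = m + c) from by omega]
            · simp [hp1, φc_apply, Finsupp.single_apply, hpm,
                show ¬(p + c = m + c) from by omega]
        | H p =>
          rw [hb.lie_LH]
          rcases eq_or_ne (p + c) 0 with hp | hp <;> simp [hp, φc_apply]
        | I p => simp [hb.lie_LI, φc_apply]
        | J p => simp [hb.lie_LJ, φc_apply]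
        | C1 => simp [hC1', φc_apply]
        | C2 => simp [hC2', φc_apply]
        | C3 => simp [hC3', φc_apply]
    have hL : ∀ m : ℤ, b.repr z (L m) = 0 := by
      intro m
      rcases eq_or_ne m 1 with rfl | hm
      · have h := hLgen (-1) 1
        have hne : ((1 : ℤ) : ℂ) - ((-1 : ℤ) : ℂ) ≠ 0 := by norm_num
        exact (mul_eq_zero.mp h).resolve_left hne
      · have h := hLgen 1 m
        have hne : ((m : ℤ) : ℂ) - ((1 : ℤ) : ℂ) ≠ 0 := by
          intro hc
          exact hm (by exact_mod_cast sub_eq_zero.mp hc)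
        exact (mul_eq_zero.mp h).resolve_left hne
    -- kill H 0 coefficient
    have hH0 : b.repr z (H 0) = 0 := by
      have h := pgca_key b (b (I 1)) (I 1) (-(φc (L 0)) - φc (H 0)) ?_ (hz (b (I 1)))
      · simp only [LinearMap.sub_apply, LinearMap.neg_apply, φc_apply, hL 0, neg_zero,
          zero_sub, neg_eq_zero] at h
        exact h
      · intro k
        cases k with
        | L p =>
          rw [← lie_skew, hb.lie_LI]
          rcases eq_or_ne p 0 with rfl | hp
          · simp [φc_apply]
          · simp [φc_apply, Finsupp.single_apply, hp, show ¬(1 + p = 1) from by omega]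
        | H p =>
          rw [← lie_skew, hb.lie_HI]
          rcases eq_or_ne p 0 with rfl | hp
          · simp [φc_apply]
          · simp [φc_apply, Finsupp.single_apply, hp, show ¬(1 + p = 1) from by omega]
        | I p => simp [hb.lie_II, φc_apply]
        | J p => simp [hb.lie_IJ, φc_apply]
        | C1 => simp [hC1', φc_apply]
        | C2 => simp [hC2', φc_apply]
        | C3 => simp [hC3', φc_apply]
    have hHall : ∀ m : ℤ, b.repr z (H m) = 0 := by
      intro m
      rcases eq_or_ne m 0 with rfl | hm
      · exact hH0
      · exact hH m hm
    -- assemble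
    have htot : Finsupp.linearCombination ℂ b (b.repr z) = z := b.linearCombination_repr z
    rw [← htot, Finsupp.linearCombination_apply, Finsupp.sum]
    refine Submodule.sum_mem _ fun i hi => ?_
    rw [Finsupp.mem_support_iff] at hi
    cases i with
    | L m => exact absurd (hL m) hi
    | H m => exact absurd (hHall m) hi
    | I m => exact absurd (hI m) hi
    | J m => exact absurd (hJ m) hi
    | C1 => exact Submodule.smul_mem _ _ (Submodule.subset_span (by simp))
    | C2 => exact Submodule.smul_mem _ _ (Submodule.subset_span (by simp))
    | C3 => exact Submodule.smul_mem _ _ (Submodule.subset_span (by simp))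
  · rw [Submodule.span_le]
    rintro x hx
    simp only [Set.mem_insert_iff, Set.mem_singleton_iff] at hx
    have hc : x ∈ LieAlgebra.center ℂ G := by
      rw [LieAlgebra.center, LieModule.mem_maxTrivSubmodule]
      intro y
      rcases hx with rfl | rfl | rfl
      · rw [← lie_skew, hb.lie_C1, neg_zero]
      · rw [← lie_skew, hb.lie_C2, neg_zero]
      · rw [← lie_skew, hb.lie_C3, neg_zero]
    exact hc
end

section
/- The positive part 𝒢⁺ of the planar Galilean conformal algebra, spanned by {L_m, H_m, I_m, J_m : m ≥ 1}, is a Lie subalgebra of 𝒢, and as a Lie algebra it is generated by the five elements L_1, L_2, H_1, I_1, J_1. -/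
/-- Basis indices for the planar Galilean conformal algebra. -/
inductive GIdx : Type
  | L : ℤ → GIdx
  | H : ℤ → GIdx
  | I : ℤ → GIdx
  | J : ℤ → GIdx

open GIdx in
/-- `IsPGCA b` says that the Lie algebra `G` together with the basis `b` indexed by
`GIdx` realizes the planar Galilean conformal algebra: the basis elements satisfy the
defining bracket relations, and all other brackets among basis elements vanish. -/
structure IsPGCA (G : Type*) [LieRing G] [LieAlgebra ℂ G] (b : Module.Basis GIdx ℂ G) : Prop where
  lie_LL : ∀ n m : ℤ, ⁅b (L n), b (L m)⁆ = ((m : ℂ) - n) • b (L (m + n))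
  lie_LH : ∀ n m : ℤ, ⁅b (L n), b (H m)⁆ = (m : ℂ) • b (H (m + n))
  lie_LI : ∀ n m : ℤ, ⁅b (L n), b (I m)⁆ = ((m : ℂ) - n) • b (I (m + n))
  lie_LJ : ∀ n m : ℤ, ⁅b (L n), b (J m)⁆ = ((m : ℂ) - n) • b (J (m + n))
  lie_HI : ∀ n m : ℤ, ⁅b (H n), b (I m)⁆ = b (I (m + n))
  lie_HJ : ∀ n m : ℤ, ⁅b (H n), b (J m)⁆ = - b (J (m + n))
  lie_HH : ∀ n m : ℤ, ⁅b (H n), b (H m)⁆ = 0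
  lie_II : ∀ n m : ℤ, ⁅b (I n), b (I m)⁆ = 0
  lie_IJ : ∀ n m : ℤ, ⁅b (I n), b (J m)⁆ = 0
  lie_JJ : ∀ n m : ℤ, ⁅b (J n), b (J m)⁆ = 0

/-- The set of positive-index basis vectors of the planar Galilean conformal algebra,
spanning the positive part `𝒢⁺`. -/
def pgcaPosSet {G : Type*} [LieRing G] [LieAlgebra ℂ G] (b : Module.Basis GIdx ℂ G) : Set G :=
  {x : G | ∃ m : ℤ, 1 ≤ m ∧
    (x = b (GIdx.L m) ∨ x = b (GIdx.H m) ∨ x = b (GIdx.I m) ∨ x = b (GIdx.J m))}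

open GIdx

lemma pgca_memL {G : Type*} [LieRing G] [LieAlgebra ℂ G] (b : Module.Basis GIdx ℂ G)
    {m : ℤ} (hm : 1 ≤ m) : b (L m) ∈ Submodule.span ℂ (pgcaPosSet b) :=
  Submodule.subset_span ⟨m, hm, Or.inl rfl⟩

lemma pgca_memH {G : Type*} [LieRing G] [LieAlgebra ℂ G] (b : Module.Basis GIdx ℂ G)
    {m : ℤ} (hm : 1 ≤ m) : b (H m) ∈ Submodule.span ℂ (pgcaPosSet b) :=
  Submodule.subset_span ⟨m, hm, Or.inr (Or.inl rfl)⟩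

lemma pgca_memI {G : Type*} [LieRing G] [LieAlgebra ℂ G] (b : Module.Basis GIdx ℂ G)
    {m : ℤ} (hm : 1 ≤ m) : b (I m) ∈ Submodule.span ℂ (pgcaPosSet b) :=
  Submodule.subset_span ⟨m, hm, Or.inr (Or.inr (Or.inl rfl))⟩

lemma pgca_memJ {G : Type*} [LieRing G] [LieAlgebra ℂ G] (b : Module.Basis GIdx ℂ G)
    {m : ℤ} (hm : 1 ≤ m) : b (J m) ∈ Submodule.span ℂ (pgcaPosSet b) :=
  Submodule.subset_span ⟨m, hm, Or.inr (Or.inr (Or.inr rfl))⟩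

lemma pgca_lie_basic {G : Type*} [LieRing G] [LieAlgebra ℂ G]
    (b : Module.Basis GIdx ℂ G) (hb : IsPGCA G b) :
    ∀ x ∈ pgcaPosSet b, ∀ y ∈ pgcaPosSet b,
      ⁅x, y⁆ ∈ Submodule.span ℂ (pgcaPosSet b) := by
  rintro x ⟨m, hm, hx⟩ y ⟨n, hn, hy⟩
  have h1 : (1:ℤ) ≤ n + m := by linarith
  have h2 : (1:ℤ) ≤ m + n := by linarith
  rcases hx with rfl | rfl | rfl | rfl <;> rcases hy with rfl | rfl | rfl | rfl
  · rw [hb.lie_LL]; exact Submodule.smul_mem _ _ (pgca_memL b h1)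
  · rw [hb.lie_LH]; exact Submodule.smul_mem _ _ (pgca_memH b h1)
  · rw [hb.lie_LI]; exact Submodule.smul_mem _ _ (pgca_memI b h1)
  · rw [hb.lie_LJ]; exact Submodule.smul_mem _ _ (pgca_memJ b h1)
  · rw [← lie_skew, hb.lie_LH]
    exact Submodule.neg_mem _ (Submodule.smul_mem _ _ (pgca_memH b h2))
  · rw [hb.lie_HH]; exact Submodule.zero_mem _
  · rw [hb.lie_HI]; exact pgca_memI b h1
  · rw [hb.lie_HJ]; exact Submodule.neg_mem _ (pgca_memJ b h1)
  · rw [← lie_skew, hb.lie_LI]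
    exact Submodule.neg_mem _ (Submodule.smul_mem _ _ (pgca_memI b h2))
  · rw [← lie_skew, hb.lie_HI]; exact Submodule.neg_mem _ (pgca_memI b h2)
  · rw [hb.lie_II]; exact Submodule.zero_mem _
  · rw [hb.lie_IJ]; exact Submodule.zero_mem _
  · rw [← lie_skew, hb.lie_LJ]
    exact Submodule.neg_mem _ (Submodule.smul_mem _ _ (pgca_memJ b h2))
  · rw [← lie_skew, hb.lie_HJ, neg_neg]; exact pgca_memJ b h2
  · rw [← lie_skew, hb.lie_IJ, neg_zero]; exact Submodule.zero_mem _
  · rw [hb.lie_JJ]; exact Submodule.zero_mem _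

lemma pgca_span_lie {G : Type*} [LieRing G] [LieAlgebra ℂ G]
    (b : Module.Basis GIdx ℂ G) (hb : IsPGCA G b) :
    ∀ x ∈ Submodule.span ℂ (pgcaPosSet b), ∀ y ∈ Submodule.span ℂ (pgcaPosSet b),
      ⁅x, y⁆ ∈ Submodule.span ℂ (pgcaPosSet b) := by
  intro x hx y hy
  induction hx, hy using Submodule.span_induction₂ with
  | mem_mem u v hu hv => exact pgca_lie_basic b hb u hu v hv
  | zero_left v hv => simp
  | zero_right u hu => simp
  | add_left u v w hu hv hw h1 h2 =>
      rw [add_lie]; exact Submodule.add_mem _ h1 h2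
  | add_right u v w hu hv hw h1 h2 =>
      rw [lie_add]; exact Submodule.add_mem _ h1 h2
  | smul_left r u v hu hv h =>
      rw [smul_lie]; exact Submodule.smul_mem _ _ h
  | smul_right r u v hu hv h =>
      rw [lie_smul]; exact Submodule.smul_mem _ _ h

/-- The positive part `𝒢⁺ = span{L_m, H_m, I_m, J_m : m ≥ 1}` is a Lie subalgebra of the
planar Galilean conformal algebra `𝒢`, and as a Lie algebra it is generated by the five
elements `L_1, L_2, H_1, I_1, J_1`. -/
theorem pgca_positive_part {G : Type*} [LieRing G] [LieAlgebra ℂ G]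
    (b : Module.Basis GIdx ℂ G) (hb : IsPGCA G b) :
    (∀ x ∈ Submodule.span ℂ (pgcaPosSet b), ∀ y ∈ Submodule.span ℂ (pgcaPosSet b),
      ⁅x, y⁆ ∈ Submodule.span ℂ (pgcaPosSet b)) ∧
    ((LieSubalgebra.lieSpan ℂ G
        {b (GIdx.L 1), b (GIdx.L 2), b (GIdx.H 1), b (GIdx.I 1), b (GIdx.J 1)} : Set G)
      = ↑(Submodule.span ℂ (pgcaPosSet b))) := by
  refine ⟨pgca_span_lie b hb, ?_⟩
  set gen : Set G := {b (GIdx.L 1), b (GIdx.L 2), b (GIdx.H 1), b (GIdx.I 1), b (GIdx.J 1)}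
  set T : LieSubalgebra ℂ G := LieSubalgebra.lieSpan ℂ G gen with hT
  -- the span as a Lie subalgebra
  let S : LieSubalgebra ℂ G :=
    { Submodule.span ℂ (pgcaPosSet b) with
      lie_mem' := fun {x y} hx hy => pgca_span_lie b hb x hx y hy }
  have hgen : gen ⊆ S := by
    rintro z (rfl | rfl | rfl | rfl | rfl)
    · exact pgca_memL b le_rfl
    · exact pgca_memL b (by norm_num)
    · exact pgca_memH b le_rfl
    · exact pgca_memI b le_rfl
    · exact pgca_memJ b le_rfl
  have hLmem : ∀ m : ℤ, 1 ≤ m → b (L m) ∈ T := by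
    intro m hm
    refine Int.le_induction (motive := fun n _ => b (L n) ∈ T) ?_ ?_ m hm
    · exact LieSubalgebra.subset_lieSpan (by left; rfl)
    · intro k hk ih
      rcases eq_or_lt_of_le hk with h | h
      · rw [← h]
        exact LieSubalgebra.subset_lieSpan (by right; left; rfl)
      · have hne : (k : ℂ) - 1 ≠ 0 := by
          have : (k : ℂ) ≠ 1 := by exact_mod_cast (by omega : k ≠ 1)
          exact sub_ne_zero.mpr this
        have key : b (L (k + 1)) = ((k : ℂ) - 1)⁻¹ • ⁅b (L 1), b (L k)⁆ := by
          rw [hb.lie_LL, smul_smul]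
          push_cast
          rw [inv_mul_cancel₀ hne, one_smul]
        rw [key]
        exact T.smul_mem _ (T.lie_mem
          (LieSubalgebra.subset_lieSpan (by left; rfl)) ih)
  have hL1 : b (L 1) ∈ T := hLmem 1 le_rfl
  have hH1 : b (H 1) ∈ T :=
    LieSubalgebra.subset_lieSpan (by right; right; left; rfl)
  have hHmem : ∀ m : ℤ, 1 ≤ m → b (H m) ∈ T := by
    intro m hm
    refine Int.le_induction (motive := fun n _ => b (H n) ∈ T) ?_ ?_ m hm
    · exact hH1
    · intro k hk ih
      have hne : (k : ℂ) ≠ 0 := by exact_mod_cast (by omega : k ≠ 0)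
      have key : b (H (k + 1)) = (k : ℂ)⁻¹ • ⁅b (L 1), b (H k)⁆ := by
        rw [hb.lie_LH, smul_smul, inv_mul_cancel₀ hne, one_smul]
      rw [key]
      exact T.smul_mem _ (T.lie_mem hL1 ih)
  have hImem : ∀ m : ℤ, 1 ≤ m → b (I m) ∈ T := by
    intro m hm
    refine Int.le_induction (motive := fun n _ => b (I n) ∈ T) ?_ ?_ m hm
    · exact LieSubalgebra.subset_lieSpan (by right; right; right; left; rfl)
    · intro k hk ih
      have key : b (I (k + 1)) = ⁅b (H 1), b (I k)⁆ := (hb.lie_HI 1 k).symm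
      rw [key]
      exact T.lie_mem hH1 ih
  have hJmem : ∀ m : ℤ, 1 ≤ m → b (J m) ∈ T := by
    intro m hm
    refine Int.le_induction (motive := fun n _ => b (J n) ∈ T) ?_ ?_ m hm
    · exact LieSubalgebra.subset_lieSpan (by right; right; right; right; rfl)
    · intro k hk ih
      have key : b (J (k + 1)) = -⁅b (H 1), b (J k)⁆ := by
        rw [hb.lie_HJ, neg_neg]
      rw [key]
      exact T.neg_mem (T.lie_mem hH1 ih)
  apply Set.Subset.antisymm
  · intro x hx
    exact (LieSubalgebra.lieSpan_le.mpr hgen) hx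
  · intro x hx
    have hsub : pgcaPosSet b ⊆ (T : Set G) := by
      rintro z ⟨m, hm, rfl | rfl | rfl | rfl⟩
      · exact hLmem m hm
      · exact hHmem m hm
      · exact hImem m hm
      · exact hJmem m hm
    exact Submodule.span_le.mpr hsub hx
end

section
/- In the universal enveloping algebra U(𝒢̃) of the universal central extension of the planar Galilean conformal algebra, for any k ∈ ℤ≥0 and a ∈ ℕ, the following identity holds: [I_{k+1}, L_{-k}^a] = Σ_{s=1}^{a} C(a,s) · (∏_{t=0}^{s-1} (tk - 2k - 1)) · L_{-k}^{a-s} I_{1+k-sk}, where C(a,s) is the binomial coefficient and the bracket is the commutator in U(𝒢̃). -/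
lemma aux_comm_pow {A : Type*} [Ring A] [Algebra ℂ A] (x : A) (f : ℕ → A) (d : ℕ → ℂ)
    (hf : ∀ s, ⁅f s, x⁆ = d s • f (s + 1)) (a : ℕ) :
    ⁅f 0, x ^ a⁆ = ∑ s ∈ Finset.Icc 1 a,
      ((a.choose s : ℂ) * ∏ t ∈ Finset.range s, d t) • (x ^ (a - s) * f s) := by
  induction a with
  | zero => simp [Ring.lie_def]
  | succ a ih =>
    have hx : ∀ s, f s * x = x * f s + d s • f (s + 1) := by
      intro s
      have h := hf s
      rw [Ring.lie_def, sub_eq_iff_eq_add] at h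
      rw [h, add_comm]
    have expand : ⁅f 0, x ^ (a + 1)⁆ = ⁅f 0, x ^ a⁆ * x + x ^ a * ⁅f 0, x⁆ := by
      simp only [Ring.lie_def, pow_succ]
      noncomm_ring
    rw [expand, ih, hf 0, Finset.sum_mul]
    have step : ∀ s ∈ Finset.Icc 1 a,
        (((a.choose s : ℂ) * ∏ t ∈ Finset.range s, d t) • (x ^ (a - s) * f s)) * x
        = ((a.choose s : ℂ) * ∏ t ∈ Finset.range s, d t) • (x ^ (a + 1 - s) * f s)
          + ((a.choose s : ℂ) * ∏ t ∈ Finset.range (s + 1), d t) • (x ^ (a - s) * f (s + 1)) := by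
      intro s hs
      rw [Finset.mem_Icc] at hs
      have hpow : x ^ (a - s) * x = x ^ (a + 1 - s) := by
        rw [← pow_succ, Nat.sub_add_comm hs.2]
      rw [smul_mul_assoc, mul_assoc, hx s, mul_add, ← mul_assoc, hpow, mul_smul_comm,
        smul_add, smul_smul, Finset.prod_range_succ, mul_assoc]
    rw [Finset.sum_congr rfl step, Finset.sum_add_distrib]
    have reindex : ∀ (n : ℕ) (g : ℕ → A),
        ∑ s ∈ Finset.Icc 1 n, g s = ∑ j ∈ Finset.range n, g (j + 1) := by
      intro n g
      rw [← Finset.Ico_add_one_right_eq_Icc, Finset.sum_Ico_eq_sum_range]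
      simp [add_comm]
    rw [reindex a, reindex a, reindex (a + 1)]
    have pascal : ∀ j ∈ Finset.range (a + 1),
        (((a + 1).choose (j + 1) : ℂ) * ∏ t ∈ Finset.range (j + 1), d t)
          • (x ^ (a + 1 - (j + 1)) * f (j + 1))
        = ((a.choose (j + 1) : ℂ) * ∏ t ∈ Finset.range (j + 1), d t)
            • (x ^ (a + 1 - (j + 1)) * f (j + 1))
          + ((a.choose j : ℂ) * ∏ t ∈ Finset.range (j + 1), d t)
            • (x ^ (a + 1 - (j + 1)) * f (j + 1)) := by
      intro j hj
      rw [Nat.choose_succ_succ']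
      push_cast
      rw [add_mul, add_smul, add_comm]
    rw [Finset.sum_congr rfl pascal, Finset.sum_add_distrib]
    rw [Finset.sum_range_succ, Finset.sum_range_succ']
    simp only [Nat.choose_succ_self, Nat.cast_zero, zero_mul, zero_smul, add_zero,
      Nat.choose_zero_right, Nat.cast_one, one_mul, Finset.prod_range_one,
      Nat.add_sub_cancel, Nat.succ_sub_succ_eq_sub, zero_add, mul_smul_comm]
    abel


open UniversalEnvelopingAlgebra in
/-- In `U(𝒢̃)`: `[I_{k+1}, L_{-k}^a] = Σ_{s=1}^a C(a,s) (∏_{t=0}^{s-1}(tk-2k-1))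
L_{-k}^{a-s} I_{1+k-sk}`. -/
theorem uea_comm_I_Lpow {G : Type*} [LieRing G] [LieAlgebra ℂ G]
    (b : Module.Basis GtIdx ℂ G) (hb : IsPGCAExt G b) (k : ℕ) (a : ℕ) (ha : 1 ≤ a) :
    ⁅ι ℂ (b (GtIdx.I ((k : ℤ) + 1))),
        (ι ℂ (b (GtIdx.L (-(k : ℤ)))) : UniversalEnvelopingAlgebra ℂ G) ^ a⁆
      = ∑ s ∈ Finset.Icc 1 a,
          ((a.choose s : ℂ) * ∏ t ∈ Finset.range s, ((t : ℂ) * k - 2 * k - 1)) •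
            ((ι ℂ (b (GtIdx.L (-(k : ℤ)))) : UniversalEnvelopingAlgebra ℂ G) ^ (a - s)
              * ι ℂ (b (GtIdx.I (1 + (k : ℤ) - (s : ℤ) * k)))) := by
  have hf : ∀ s : ℕ,
      ⁅(fun s : ℕ => ι ℂ (b (GtIdx.I (1 + (k : ℤ) - (s : ℤ) * k)))) s,
        (ι ℂ (b (GtIdx.L (-(k : ℤ)))) : UniversalEnvelopingAlgebra ℂ G)⁆
      = ((fun s : ℕ => ((s : ℂ) * k - 2 * k - 1)) s) •
        (fun s : ℕ => ι ℂ (b (GtIdx.I (1 + (k : ℤ) - (s : ℤ) * k)))) (s + 1) := by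
    intro s
    simp only
    letI := LieRing.ofAssociativeRing (A := UniversalEnvelopingAlgebra ℂ G)
    letI := LieAlgebra.ofAssociativeAlgebra (R := ℂ) (A := UniversalEnvelopingAlgebra ℂ G)
    rw [← LieHom.map_lie, ← map_smul]
    congr 1
    rw [← lie_skew, hb.lie_LI]
    have hidx : (1 + (k : ℤ) - (s : ℤ) * k) + (-(k : ℤ))
        = 1 + (k : ℤ) - ((s : ℤ) + 1) * k := by ring
    rw [hidx]
    rw [← neg_smul]
    congr 1
    push_cast
    ring
  have h0 : GtIdx.I ((k : ℤ) + 1) = GtIdx.I (1 + (k : ℤ) - ((0 : ℕ) : ℤ) * k) := by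
    push_cast; rw [zero_mul, sub_zero, add_comm]
  rw [h0]
  exact aux_comm_pow _ _ _ hf a
end

section
/- Let φ : 𝒢⁺ → ℂ be a Lie algebra homomorphism, V a Whittaker 𝒢-module of type φ with cyclic Whittaker vector w_φ, and define the modified 'star' action of 𝒢⁺ on V by x ⋆ v = x·v − φ(x)v. Then for every n ≥ 1 and E_n ∈ {L_n, H_n, I_n, J_n}, the operator v ↦ E_n ⋆ v acts locally nilpotently on V, i.e., for each v ∈ V there exists p ∈ ℕ with E_n ⋆ (E_n ⋆ (⋯ ⋆ v)) = 0 after p applications. -/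
attribute [local instance 100] LieRing.ofAssociativeRing

section Aux

open GIdx

variable {G : Type*} [LieRing G] [LieAlgebra ℂ G] {V : Type*} [AddCommGroup V]
  [Module ℂ V] [LieRingModule G V] [LieModule ℂ G V]

/-- Monomials in nonpositive-index basis elements applied to `w`, with their weight. -/
inductive Mon (b : Module.Basis GIdx ℂ G) (w : V) : V → ℕ → Prop
  | base : Mon b w w 0
  | step (m : ℕ) (x : G) (v : V) (d : ℕ)
      (hx : x = b (L (-(m : ℤ))) ∨ x = b (H (-(m : ℤ))) ∨
        x = b (I (-(m : ℤ))) ∨ x = b (J (-(m : ℤ))))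
      (hv : Mon b w v d) : Mon b w ⁅x, v⁆ (d + m + 1)

/-- Span of monomials of weight at most `d`. -/
def Fd (b : Module.Basis GIdx ℂ G) (w : V) (d : ℕ) : Submodule ℂ V :=
  Submodule.span ℂ {v | ∃ d' ≤ d, Mon b w v d'}

lemma Fd_mono (b : Module.Basis GIdx ℂ G) (w : V) {d₁ d₂ : ℕ} (h : d₁ ≤ d₂) :
    Fd b w d₁ ≤ Fd b w d₂ :=
  Submodule.span_mono fun _ ⟨d', hd', hm⟩ => ⟨d', hd'.trans h, hm⟩

lemma mon_mem_Fd {b : Module.Basis GIdx ℂ G} {w v : V} {d : ℕ} (h : Mon b w v d) :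
    v ∈ Fd b w d :=
  Submodule.subset_span ⟨d, le_rfl, h⟩

lemma mon_zero {b : Module.Basis GIdx ℂ G} {w v : V} {d : ℕ} (h : Mon b w v d) (hd : d = 0) :
    v = w := by
  induction h with
  | base => rfl
  | step m x v d hx hv ih => omega

lemma lie_mem_Fd {b : Module.Basis GIdx ℂ G} {w : V} (m : ℕ) (x : G)
    (hx : x = b (L (-(m : ℤ))) ∨ x = b (H (-(m : ℤ))) ∨
      x = b (I (-(m : ℤ))) ∨ x = b (J (-(m : ℤ))))
    {d : ℕ} {v : V} (hv : v ∈ Fd b w d) : ⁅x, v⁆ ∈ Fd b w (d + m + 1) := by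
  induction hv using Submodule.span_induction with
  | mem v hv =>
    obtain ⟨d', hd', hm⟩ := hv
    exact Fd_mono b w (by omega) (mon_mem_Fd (Mon.step m x v d' hx hm))
  | zero => rw [lie_zero]; exact Submodule.zero_mem _
  | add u v _ _ hu hv' => rw [lie_add]; exact Submodule.add_mem _ hu hv'
  | smul c u _ hu => rw [lie_smul]; exact Submodule.smul_mem _ c hu

end Aux

/-- On a Whittaker `𝒢`-module `V` of type `φ` with cyclic Whittaker vector `w`, each
`E_n ∈ {L_n, H_n, I_n, J_n}` (`n ≥ 1`) acts locally nilpotently under the modified star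
action `x ⋆ v = x·v − φ(x)v`. -/
theorem whittaker_star_locally_nilpotent {G : Type*} [LieRing G] [LieAlgebra ℂ G]
    (b : Module.Basis GIdx ℂ G) (hb : IsPGCA G b)
    (Gp : LieSubalgebra ℂ G) (hGp : (Gp : Submodule ℂ G) = Submodule.span ℂ (pgcaPosSet b))
    (φ : Gp →ₗ⁅ℂ⁆ ℂ)
    (V : Type*) [AddCommGroup V] [Module ℂ V] [LieRingModule G V] [LieModule ℂ G V]
    (w : V)
    (hwhit : ∀ x : Gp, ⁅(x : G), w⁆ = φ x • w)
    (hcyc : LieSubmodule.lieSpan ℂ G {w} = ⊤) :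
    ∀ n : ℤ, 1 ≤ n → ∀ e : Gp,
      ((e : G) = b (GIdx.L n) ∨ (e : G) = b (GIdx.H n) ∨
        (e : G) = b (GIdx.I n) ∨ (e : G) = b (GIdx.J n)) →
      ∀ v : V, ∃ p : ℕ, (fun u => ⁅(e : G), u⁆ - φ e • u)^[p] v = 0 := by
  open GIdx in
  intro n hn e he v
  classical
  -- positive basis elements belong to `Gp`
  have hmem : ∀ x ∈ pgcaPosSet b, x ∈ Gp := by
    intro x hx
    rw [← LieSubalgebra.mem_toSubmodule, hGp]
    exact Submodule.subset_span hx
  -- brackets of basis elements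
  have hbrak : ∀ (p t : ℤ) (yg xg : G),
      (yg = b (L p) ∨ yg = b (H p) ∨ yg = b (I p) ∨ yg = b (J p)) →
      (xg = b (L t) ∨ xg = b (H t) ∨ xg = b (I t) ∨ xg = b (J t)) →
      ∃ (c : ℂ) (zi : GIdx),
        (zi = L (t + p) ∨ zi = H (t + p) ∨ zi = I (t + p) ∨ zi = J (t + p)) ∧
        ⁅yg, xg⁆ = c • b zi := by
    rintro p t yg xg (rfl | rfl | rfl | rfl) (rfl | rfl | rfl | rfl)
    · exact ⟨(t : ℂ) - p, L (t + p), Or.inl rfl, hb.lie_LL p t⟩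
    · exact ⟨(t : ℂ), H (t + p), Or.inr (Or.inl rfl), hb.lie_LH p t⟩
    · exact ⟨(t : ℂ) - p, I (t + p), Or.inr (Or.inr (Or.inl rfl)), hb.lie_LI p t⟩
    · exact ⟨(t : ℂ) - p, J (t + p), Or.inr (Or.inr (Or.inr rfl)), hb.lie_LJ p t⟩
    · refine ⟨-(p : ℂ), H (t + p), Or.inr (Or.inl rfl), ?_⟩
      rw [← lie_skew, hb.lie_LH t p, add_comm p t, neg_smul]
    · refine ⟨0, H (t + p), Or.inr (Or.inl rfl), ?_⟩
      rw [hb.lie_HH p t, zero_smul]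
    · refine ⟨1, I (t + p), Or.inr (Or.inr (Or.inl rfl)), ?_⟩
      rw [hb.lie_HI p t, one_smul]
    · refine ⟨-1, J (t + p), Or.inr (Or.inr (Or.inr rfl)), ?_⟩
      rw [hb.lie_HJ p t, neg_one_smul]
    · refine ⟨(t : ℂ) - p, I (t + p), Or.inr (Or.inr (Or.inl rfl)), ?_⟩
      rw [← lie_skew, hb.lie_LI t p, add_comm p t, ← neg_smul, neg_sub]
    · refine ⟨-1, I (t + p), Or.inr (Or.inr (Or.inl rfl)), ?_⟩
      rw [← lie_skew, hb.lie_HI t p, add_comm p t, neg_one_smul]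
    · refine ⟨0, I (t + p), Or.inr (Or.inr (Or.inl rfl)), ?_⟩
      rw [hb.lie_II p t, zero_smul]
    · refine ⟨0, J (t + p), Or.inr (Or.inr (Or.inr rfl)), ?_⟩
      rw [hb.lie_IJ p t, zero_smul]
    · refine ⟨(t : ℂ) - p, J (t + p), Or.inr (Or.inr (Or.inr rfl)), ?_⟩
      rw [← lie_skew, hb.lie_LJ t p, add_comm p t, ← neg_smul, neg_sub]
    · refine ⟨1, J (t + p), Or.inr (Or.inr (Or.inr rfl)), ?_⟩
      rw [← lie_skew, hb.lie_HJ t p, add_comm p t, neg_neg, one_smul]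
    · refine ⟨0, J (t + p), Or.inr (Or.inr (Or.inr rfl)), ?_⟩
      rw [← lie_skew, hb.lie_IJ t p, neg_zero, zero_smul]
    · refine ⟨0, J (t + p), Or.inr (Or.inr (Or.inr rfl)), ?_⟩
      rw [hb.lie_JJ p t, zero_smul]
  -- key lemma: the star action of a positive basis element decreases weight
  have key : ∀ (u : V) (d : ℕ), Mon b w u d → ∀ (y : Gp) (p : ℤ), 1 ≤ p →
      ((y : G) = b (L p) ∨ (y : G) = b (H p) ∨ (y : G) = b (I p) ∨ (y : G) = b (J p)) →
      ⁅(y : G), u⁆ - φ y • u ∈ Fd b w (d - 1) := by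
    intro u d hm
    induction hm with
    | base =>
      intro y p hp hy
      rw [hwhit y, sub_self]
      exact Submodule.zero_mem _
    | step m x v' d' hx hv ih =>
      intro y p hp hy
      have expand : ⁅(y : G), ⁅x, v'⁆⁆ - φ y • ⁅x, v'⁆
          = ⁅x, ⁅(y : G), v'⁆ - φ y • v'⁆ + ⁅⁅(y : G), x⁆, v'⁆ := by
        rw [leibniz_lie, lie_sub, lie_smul]
        abel
      rw [expand]
      have hd : d' + m + 1 - 1 = d' + m := by omega
      rw [hd]
      refine Submodule.add_mem _ ?_ ?_
      · by_cases hd0 : d' = 0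
        · have hw : v' = w := mon_zero hv hd0
          rw [hw, hwhit y, sub_self, lie_zero]
          exact Submodule.zero_mem _
        · have h1 := ih y p hp hy
          have h2 := lie_mem_Fd m x hx h1
          exact Fd_mono b w (by omega) h2
      · obtain ⟨c, zi, hzi, hz⟩ := hbrak p (-(m : ℤ)) _ _ hy hx
        rw [hz, smul_lie]
        refine Submodule.smul_mem _ c ?_
        rcases le_or_gt 1 (-(m : ℤ) + p) with hq | hq
        · -- the bracket lands in the positive part
          have hmemz : b zi ∈ Gp := by
            refine hmem _ ⟨-(m : ℤ) + p, hq, ?_⟩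
            rcases hzi with rfl | rfl | rfl | rfl
            · exact Or.inl rfl
            · exact Or.inr (Or.inl rfl)
            · exact Or.inr (Or.inr (Or.inl rfl))
            · exact Or.inr (Or.inr (Or.inr rfl))
          have hz1 : ⁅b zi, v'⁆
              = (⁅((⟨b zi, hmemz⟩ : Gp) : G), v'⁆ - φ ⟨b zi, hmemz⟩ • v')
                + φ ⟨b zi, hmemz⟩ • v' := by
            simp
          rw [hz1]
          refine Submodule.add_mem _ ?_ (Submodule.smul_mem _ _ ?_)
          · refine Fd_mono b w (by omega) (ih ⟨b zi, hmemz⟩ (-(m : ℤ) + p) hq ?_)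
            rcases hzi with rfl | rfl | rfl | rfl
            · exact Or.inl rfl
            · exact Or.inr (Or.inl rfl)
            · exact Or.inr (Or.inr (Or.inl rfl))
            · exact Or.inr (Or.inr (Or.inr rfl))
          · exact Fd_mono b w (by omega) (mon_mem_Fd hv)
        · -- the bracket has nonpositive index
          have hidx : -(((m - p).toNat : ℕ) : ℤ) = -(m : ℤ) + p := by omega
          rw [← hidx] at hzi
          have hstep := Mon.step ((m : ℤ) - p).toNat (b zi) v' d'
            (by
              rcases hzi with rfl | rfl | rfl | rfl
              · exact Or.inl rfl
              · exact Or.inr (Or.inl rfl)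
              · exact Or.inr (Or.inr (Or.inl rfl))
              · exact Or.inr (Or.inr (Or.inr rfl))) hv
          refine Fd_mono b w (by omega) (mon_mem_Fd hstep)
  -- star action on spans
  have Fd_star : ∀ (y : Gp) (p : ℤ), 1 ≤ p →
      ((y : G) = b (L p) ∨ (y : G) = b (H p) ∨ (y : G) = b (I p) ∨ (y : G) = b (J p)) →
      ∀ (d : ℕ) (u : V), u ∈ Fd b w d → ⁅(y : G), u⁆ - φ y • u ∈ Fd b w (d - 1) := by
    intro y p hp hy d u hu
    induction hu using Submodule.span_induction with
    | mem u hu =>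
      obtain ⟨d', hd', hm⟩ := hu
      exact Fd_mono b w (by omega) (key u d' hm y p hp hy)
    | zero => rw [lie_zero, smul_zero, sub_zero]; exact Submodule.zero_mem _
    | add a c _ _ iha ihc =>
      have h : ⁅(y : G), a + c⁆ - φ y • (a + c)
          = (⁅(y : G), a⁆ - φ y • a) + (⁅(y : G), c⁆ - φ y • c) := by
        rw [lie_add, smul_add]; abel
      rw [h]; exact Submodule.add_mem _ iha ihc
    | smul r a _ iha =>
      have h : ⁅(y : G), r • a⁆ - φ y • (r • a) = r • (⁅(y : G), a⁆ - φ y • a) := by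
        rw [lie_smul, smul_sub, smul_comm r (φ y) a]
      rw [h]; exact Submodule.smul_mem _ r iha
  -- the star action kills `Fd 0`
  have Fd_zero : ∀ (y : Gp) (u : V), u ∈ Fd b w 0 → ⁅(y : G), u⁆ - φ y • u = 0 := by
    intro y u hu
    induction hu using Submodule.span_induction with
    | mem u hu =>
      obtain ⟨d', hd', hm⟩ := hu
      rw [mon_zero hm (by omega), hwhit y, sub_self]
    | zero => rw [lie_zero, smul_zero, sub_zero]
    | add a c _ _ iha ihc =>
      have h : ⁅(y : G), a + c⁆ - φ y • (a + c)
          = (⁅(y : G), a⁆ - φ y • a) + (⁅(y : G), c⁆ - φ y • c) := by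
        rw [lie_add, smul_add]; abel
      rw [h, iha, ihc, add_zero]
    | smul r a _ iha =>
      have h : ⁅(y : G), r • a⁆ - φ y • (r • a) = r • (⁅(y : G), a⁆ - φ y • a) := by
        rw [lie_smul, smul_sub, smul_comm r (φ y) a]
      rw [h, iha, smul_zero]
  -- the union of the `Fd` is all of `V`
  have hdir : Directed (· ≤ ·) (fun d => Fd b w d) := fun i j =>
    ⟨max i j, Fd_mono b w (le_max_left i j), Fd_mono b w (le_max_right i j)⟩
  have hMmem : ∀ u : V, u ∈ (⨆ d, Fd b w d) ↔ ∃ d, u ∈ Fd b w d := fun u =>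
    Submodule.mem_iSup_of_directed _ hdir
  have hbasis_lie : ∀ (i : GIdx) (u : V) (d : ℕ), u ∈ Fd b w d →
      ⁅b i, u⁆ ∈ (⨆ d, Fd b w d) := by
    intro i u d hu
    have hi : ∃ q : ℤ, i = L q ∨ i = H q ∨ i = I q ∨ i = J q := by
      cases i with
      | L q => exact ⟨q, Or.inl rfl⟩
      | H q => exact ⟨q, Or.inr (Or.inl rfl)⟩
      | I q => exact ⟨q, Or.inr (Or.inr (Or.inl rfl))⟩
      | J q => exact ⟨q, Or.inr (Or.inr (Or.inr rfl))⟩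
    obtain ⟨q, hq⟩ := hi
    rcases le_or_gt 1 q with h1 | h1
    · have hform : b i = b (L q) ∨ b i = b (H q) ∨ b i = b (I q) ∨ b i = b (J q) := by
        rcases hq with rfl | rfl | rfl | rfl
        · exact Or.inl rfl
        · exact Or.inr (Or.inl rfl)
        · exact Or.inr (Or.inr (Or.inl rfl))
        · exact Or.inr (Or.inr (Or.inr rfl))
      have hmemz : b i ∈ Gp := hmem _ ⟨q, h1, hform⟩
      have hsplit : ⁅b i, u⁆
          = (⁅((⟨b i, hmemz⟩ : Gp) : G), u⁆ - φ ⟨b i, hmemz⟩ • u)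
            + φ ⟨b i, hmemz⟩ • u := by simp
      rw [hsplit]
      refine Submodule.add_mem _ ?_ ?_
      · exact (hMmem _).mpr ⟨d - 1, Fd_star ⟨b i, hmemz⟩ q h1 hform d u hu⟩
      · exact (hMmem _).mpr ⟨d, Submodule.smul_mem _ _ hu⟩
    · have hidx : -(((-q).toNat : ℕ) : ℤ) = q := by omega
      have hform : b i = b (L (-(((-q).toNat : ℕ) : ℤ))) ∨
          b i = b (H (-(((-q).toNat : ℕ) : ℤ))) ∨
          b i = b (I (-(((-q).toNat : ℕ) : ℤ))) ∨
          b i = b (J (-(((-q).toNat : ℕ) : ℤ))) := by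
        rw [hidx]
        rcases hq with rfl | rfl | rfl | rfl
        · exact Or.inl rfl
        · exact Or.inr (Or.inl rfl)
        · exact Or.inr (Or.inr (Or.inl rfl))
        · exact Or.inr (Or.inr (Or.inr rfl))
      exact (hMmem _).mpr ⟨d + (-q).toNat + 1, lie_mem_Fd _ _ hform hu⟩
  have hlie : ∀ (x : G) (u : V), u ∈ (⨆ d, Fd b w d) → ⁅x, u⁆ ∈ (⨆ d, Fd b w d) := by
    intro x u hu
    obtain ⟨d, hd⟩ := (hMmem u).mp hu
    have hx : x ∈ Submodule.span ℂ (Set.range b) := by rw [b.span_eq]; trivial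
    induction hx using Submodule.span_induction with
    | mem a ha =>
      obtain ⟨i, rfl⟩ := ha
      exact hbasis_lie i u d hd
    | zero => rw [zero_lie]; exact Submodule.zero_mem _
    | add a c _ _ iha ihc => rw [add_lie]; exact Submodule.add_mem _ iha ihc
    | smul r a _ iha => rw [smul_lie]; exact Submodule.smul_mem _ r iha
  let W : LieSubmodule ℂ G V :=
    { (⨆ d, Fd b w d : Submodule ℂ V) with
      lie_mem := fun {x u} hu => hlie x u hu }
  have hwW : w ∈ W := (hMmem w).mpr ⟨0, mon_mem_Fd Mon.base⟩
  have htop : ∀ u : V, ∃ d, u ∈ Fd b w d := by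
    intro u
    have hle : LieSubmodule.lieSpan ℂ G {w} ≤ W :=
      LieSubmodule.lieSpan_le.mpr (by simpa using hwW)
    have hu : u ∈ LieSubmodule.lieSpan ℂ G {w} := by
      rw [hcyc]; exact LieSubmodule.mem_top u
    exact (hMmem u).mp (hle hu)
  obtain ⟨d, hd⟩ := htop v
  refine ⟨d + 1, ?_⟩
  have hiter : ∀ (k : ℕ) (u : V), u ∈ Fd b w k →
      (fun u => ⁅(e : G), u⁆ - φ e • u)^[k] u ∈ Fd b w 0 := by
    intro k
    induction k with
    | zero => intro u hu; exact hu
    | succ k ihk =>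
      intro u hu
      rw [Function.iterate_succ_apply]
      exact ihk _ (Fd_star e n hn he (k + 1) u hu)
  rw [Function.iterate_succ_apply']
  exact Fd_zero e _ (hiter d v hd)
end

section
/- Let φ : 𝒢⁺ → ℂ be a Lie algebra homomorphism and V a Whittaker 𝒢-module of type φ. For any v ∈ V, the subspace U(𝒢⁺) ⋆ v (the span of iterated star-action images of v under 𝒢⁺, where x ⋆ u = x·u − φ(x)u) is a finite-dimensional 𝒢⁺-submodule of V under the star action. -/
attribute [local instance 100] LieRing.ofAssociativeRing

namespace WhitAux

def deg : GIdx → ℤ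
  | .L n => n
  | .H n => n
  | .I n => n
  | .J n => n

def enc : GIdx → ℤ
  | .L n => 4 * n
  | .H n => 4 * n + 1
  | .I n => 4 * n + 2
  | .J n => 4 * n + 3

lemma enc_injective : Function.Injective enc := by
  intro i j h
  cases i <;> cases j <;> simp only [enc] at h <;>
    first
      | (congr 1; omega)
      | (exfalso; omega)

def wt (l : List GIdx) : ℤ := (l.length : ℤ) - (l.map deg).sum

@[simp] lemma wt_nil : wt [] = 0 := by simp [wt]

lemma wt_cons (i : GIdx) (l : List GIdx) : wt (i :: l) = (1 - deg i) + wt l := by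
  simp [wt]; ring

lemma wt_nonneg {l : List GIdx} (h : ∀ i ∈ l, deg i ≤ 0) : 0 ≤ wt l := by
  induction l with
  | nil => simp
  | cons a l ih =>
    have ha : deg a ≤ 0 := h a (by simp)
    have := ih (fun x hx => h x (List.mem_cons_of_mem _ hx))
    rw [wt_cons]; omega

lemma length_le_wt {l : List GIdx} (h : ∀ i ∈ l, deg i ≤ 0) : (l.length : ℤ) ≤ wt l := by
  induction l with
  | nil => simp
  | cons a l ih =>
    have ha : deg a ≤ 0 := h a (by simp)
    have := ih (fun x hx => h x (List.mem_cons_of_mem _ hx))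
    rw [wt_cons]
    simp only [List.length_cons]
    push_cast
    omega

lemma deg_bound_of_mem {l : List GIdx} (h : ∀ i ∈ l, deg i ≤ 0) {i : GIdx} (hi : i ∈ l) :
    1 - deg i ≤ wt l := by
  induction l with
  | nil => cases hi
  | cons a l ih =>
    have ha : deg a ≤ 0 := h a (by simp)
    have hl : ∀ x ∈ l, deg x ≤ 0 := fun x hx => h x (List.mem_cons_of_mem _ hx)
    have h0 : 0 ≤ wt l := wt_nonneg hl
    rcases List.mem_cons.mp hi with rfl | hi'
    · rw [wt_cons]; omega
    · have := ih hl hi'; rw [wt_cons]; omega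

lemma finite_lists (n : ℤ) :
    {l : List GIdx | (∀ i ∈ l, deg i ≤ 0) ∧ wt l ≤ n}.Finite := by
  set T : Set GIdx := {i | 1 - n ≤ deg i ∧ deg i ≤ 0} with hTdef
  have hTfin : T.Finite := by
    have hsub : T ⊆ enc ⁻¹' (Set.Icc (4 * (1 - n) - 3) 3) := by
      intro i hi
      obtain ⟨h1, h2⟩ := hi
      simp only [Set.mem_preimage, Set.mem_Icc]
      cases i <;> simp only [deg] at h1 h2 <;> simp only [enc] <;> omega
    exact ((Set.finite_Icc _ _).preimage enc_injective.injOn).subset hsub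
  have : Finite ↥T := hTfin.to_subtype
  have hfin2 : ((List.map (Subtype.val : ↥T → GIdx)) ''
      {l : List ↥T | l.length ≤ n.toNat}).Finite :=
    (List.finite_length_le ↥T n.toNat).image _
  refine hfin2.subset ?_
  rintro l ⟨hdeg, hwt⟩
  have hlen := length_le_wt hdeg
  refine ⟨l.pmap (fun i hi => (⟨i, by
      have := deg_bound_of_mem hdeg hi
      exact ⟨by omega, hdeg i hi⟩⟩ : ↥T)) (fun i hi => hi), ?_, ?_⟩
  · simp only [Set.mem_setOf_eq, List.length_pmap]
    omega
  · rw [List.map_pmap]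
    exact (List.pmap_eq_map (f := id) (l := l) _).trans (List.map_id l)


section Alg
variable {G : Type*} [LieRing G] [LieAlgebra ℂ G]
  {V : Type*} [AddCommGroup V] [Module ℂ V] [LieRingModule G V]

noncomputable def appB (b : Module.Basis GIdx ℂ G) (w : V) : List GIdx → V
  | [] => w
  | i :: l => ⁅b i, appB b w l⁆

@[simp] lemma appB_nil (b : Module.Basis GIdx ℂ G) (w : V) : appB b w [] = w := rfl

@[simp] lemma appB_cons (b : Module.Basis GIdx ℂ G) (w : V) (i : GIdx) (l : List GIdx) :
    appB b w (i :: l) = ⁅b i, appB b w l⁆ := rfl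

def Wn (b : Module.Basis GIdx ℂ G) (w : V) (n : ℤ) : Submodule ℂ V :=
  Submodule.span ℂ {u | ∃ l : List GIdx, (∀ i ∈ l, deg i ≤ 0) ∧ wt l ≤ n ∧ u = appB b w l}

lemma Wn_mono (b : Module.Basis GIdx ℂ G) (w : V) {n m : ℤ} (h : n ≤ m) : Wn b w n ≤ Wn b w m :=
  Submodule.span_mono (by rintro u ⟨l, h1, h2, rfl⟩; exact ⟨l, h1, h2.trans h, rfl⟩)

lemma mem_Wn (b : Module.Basis GIdx ℂ G) (w : V) {l : List GIdx} (h1 : ∀ i ∈ l, deg i ≤ 0)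
    {n : ℤ} (h2 : wt l ≤ n) : appB b w l ∈ Wn b w n :=
  Submodule.subset_span ⟨l, h1, h2, rfl⟩

lemma finiteDimensional_Wn (b : Module.Basis GIdx ℂ G) (w : V) (n : ℤ) :
    FiniteDimensional ℂ (Wn b w n) := by
  apply FiniteDimensional.span_of_finite
  refine ((finite_lists n).image (appB b w)).subset ?_
  rintro u ⟨l, h1, h2, rfl⟩
  exact ⟨l, ⟨h1, h2⟩, rfl⟩

lemma lie_Wn [LieModule ℂ G V] (b : Module.Basis GIdx ℂ G) (w : V) {i : GIdx} (hi : deg i ≤ 0)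
    {n : ℤ} {u : V} (hu : u ∈ Wn b w n) : ⁅b i, u⁆ ∈ Wn b w (n + (1 - deg i)) := by
  refine Submodule.span_induction (p := fun u _ => ⁅b i, u⁆ ∈ Wn b w (n + (1 - deg i)))
    ?_ ?_ ?_ ?_ hu
  · rintro x ⟨l, h1, h2, rfl⟩
    rw [← appB_cons]
    refine mem_Wn b w ?_ ?_
    · intro x hx
      rcases List.mem_cons.mp hx with rfl | hx'
      · exact hi
      · exact h1 x hx'
    · rw [wt_cons]; omega
  · simp
  · intro x y _ _ hx hy
    rw [lie_add]; exact add_mem hx hy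
  · intro a x _ hx
    rw [lie_smul]; exact Submodule.smul_mem _ _ hx

lemma exists_brk {b : Module.Basis GIdx ℂ G} (hb : IsPGCA G b) (i j : GIdx) :
    ∃ (c : ℂ) (k : GIdx), ⁅b i, b j⁆ = c • b k ∧ deg k = deg i + deg j := by
  cases i with
  | L n =>
    cases j with
    | L m => exact ⟨(m : ℂ) - n, .L (m + n), hb.lie_LL n m, by simp only [deg]; try omega⟩
    | H m => exact ⟨(m : ℂ), .H (m + n), hb.lie_LH n m, by simp only [deg]; try omega⟩
    | I m => exact ⟨(m : ℂ) - n, .I (m + n), hb.lie_LI n m, by simp only [deg]; try omega⟩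
    | J m => exact ⟨(m : ℂ) - n, .J (m + n), hb.lie_LJ n m, by simp only [deg]; try omega⟩
  | H n =>
    cases j with
    | L m =>
      exact ⟨-(n : ℂ), .H (n + m),
        by rw [← lie_skew, hb.lie_LH m n]; try rw [neg_smul], by simp only [deg]; try omega⟩
    | H m => exact ⟨0, .H (m + n), by rw [hb.lie_HH n m]; try rw [zero_smul], by simp only [deg]; try omega⟩
    | I m => exact ⟨1, .I (m + n), by rw [hb.lie_HI n m]; try rw [one_smul], by simp only [deg]; try omega⟩
    | J m =>
      exact ⟨-1, .J (m + n), by rw [hb.lie_HJ n m]; try rw [neg_smul, one_smul],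
        by simp only [deg]; try omega⟩
  | I n =>
    cases j with
    | L m =>
      exact ⟨-((n : ℂ) - m), .I (n + m),
        by rw [← lie_skew, hb.lie_LI m n]; try rw [neg_smul], by simp only [deg]; try omega⟩
    | H m =>
      exact ⟨-1, .I (n + m),
        by rw [← lie_skew, hb.lie_HI m n]; try rw [neg_smul, one_smul], by simp only [deg]; try omega⟩
    | I m => exact ⟨0, .I (m + n), by rw [hb.lie_II n m]; try rw [zero_smul], by simp only [deg]; try omega⟩
    | J m => exact ⟨0, .J (m + n), by rw [hb.lie_IJ n m]; try rw [zero_smul], by simp only [deg]; try omega⟩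
  | J n =>
    cases j with
    | L m =>
      exact ⟨-((n : ℂ) - m), .J (n + m),
        by rw [← lie_skew, hb.lie_LJ m n]; try rw [neg_smul], by simp only [deg]; try omega⟩
    | H m =>
      exact ⟨1, .J (n + m),
        by rw [← lie_skew, hb.lie_HJ m n]; try rw [neg_neg, one_smul], by simp only [deg]; try omega⟩
    | I m =>
      exact ⟨0, .J (n + m),
        by rw [← lie_skew, hb.lie_IJ m n]; try rw [neg_zero, zero_smul], by simp only [deg]; try omega⟩
    | J m => exact ⟨0, .J (m + n), by rw [hb.lie_JJ n m]; try rw [zero_smul], by simp only [deg]; try omega⟩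

lemma pos_mem {b : Module.Basis GIdx ℂ G} {Gp : LieSubalgebra ℂ G}
    (hGp : (Gp : Submodule ℂ G) = Submodule.span ℂ (pgcaPosSet b))
    {j : GIdx} (hj : 1 ≤ deg j) : b j ∈ Gp := by
  have h1 : b j ∈ pgcaPosSet b := by
    cases j with
    | L m => exact ⟨m, hj, Or.inl rfl⟩
    | H m => exact ⟨m, hj, Or.inr (Or.inl rfl)⟩
    | I m => exact ⟨m, hj, Or.inr (Or.inr (Or.inl rfl))⟩
    | J m => exact ⟨m, hj, Or.inr (Or.inr (Or.inr rfl))⟩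
  have h2 : b j ∈ Submodule.span ℂ (pgcaPosSet b) := Submodule.subset_span h1
  rw [← hGp] at h2
  exact (LieSubalgebra.mem_toSubmodule Gp).mp h2

end Alg

section Star
variable {G : Type*} [LieRing G] [LieAlgebra ℂ G]
  {V : Type*} [AddCommGroup V] [Module ℂ V] [LieRingModule G V] [LieModule ℂ G V]
  (b : Module.Basis GIdx ℂ G) (hb : IsPGCA G b) {Gp : LieSubalgebra ℂ G}
  (hGp : (Gp : Submodule ℂ G) = Submodule.span ℂ (pgcaPosSet b))
  (φ : Gp →ₗ⁅ℂ⁆ ℂ) (w : V)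
  (hwhit : ∀ x : Gp, ⁅(x : G), w⁆ = φ x • w)

include hb hGp hwhit in
lemma star_basis :
    ∀ l : List GIdx, (∀ i ∈ l, deg i ≤ 0) →
      ∀ (j : GIdx) (hj : 1 ≤ deg j),
        ⁅b j, appB b w l⁆ - φ ⟨b j, pos_mem hGp hj⟩ • appB b w l ∈ Wn b w (wt l - 1) := by
  intro l
  induction l with
  | nil =>
    intro _ j hj
    have h1 : ⁅b j, w⁆ = φ ⟨b j, pos_mem hGp hj⟩ • w := hwhit ⟨b j, pos_mem hGp hj⟩
    rw [appB_nil, h1, sub_self]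
    exact zero_mem _
  | cons i l ih =>
    intro hmono j hj
    have hi : deg i ≤ 0 := hmono i (by simp)
    have hl : ∀ x ∈ l, deg x ≤ 0 := fun x hx => hmono x (List.mem_cons_of_mem _ hx)
    obtain ⟨c, k, hck, hdk⟩ := exists_brk hb j i
    have hw := wt_cons i l
    have key : ⁅b j, appB b w (i :: l)⁆ - φ ⟨b j, pos_mem hGp hj⟩ • appB b w (i :: l)
        = c • ⁅b k, appB b w l⁆
          + ⁅b i, ⁅b j, appB b w l⁆ - φ ⟨b j, pos_mem hGp hj⟩ • appB b w l⁆ := by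
      rw [appB_cons, leibniz_lie, hck, smul_lie, lie_sub, lie_smul]
      abel
    rw [key]
    refine add_mem ?_ ?_
    · refine Submodule.smul_mem _ _ ?_
      by_cases hk : deg k ≤ 0
      · rw [← appB_cons]
        refine mem_Wn b w ?_ ?_
        · intro x hx
          rcases List.mem_cons.mp hx with rfl | hx'
          · exact hk
          · exact hl x hx'
        · rw [wt_cons]; omega
      · push_neg at hk
        have hk1 : 1 ≤ deg k := hk
        have h1 := ih hl k hk1
        have h2 : ⁅b k, appB b w l⁆
            = (⁅b k, appB b w l⁆ - φ ⟨b k, pos_mem hGp hk1⟩ • appB b w l)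
              + φ ⟨b k, pos_mem hGp hk1⟩ • appB b w l := by abel
        rw [h2]
        refine add_mem (Wn_mono b w (by omega) h1) ?_
        exact Submodule.smul_mem _ _ (Wn_mono b w (by omega) (mem_Wn b w hl le_rfl))
    · have h1 := ih hl j hj
      have h2 := lie_Wn b w hi h1
      exact Wn_mono b w (by omega) h2

include hb hGp hwhit in
lemma star_basis_Wn (j : GIdx) (hj : 1 ≤ deg j) {n : ℤ} {u : V} (hu : u ∈ Wn b w n) :
    ⁅b j, u⁆ - φ ⟨b j, pos_mem hGp hj⟩ • u ∈ Wn b w n := by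
  refine Submodule.span_induction
    (p := fun u _ => ⁅b j, u⁆ - φ ⟨b j, pos_mem hGp hj⟩ • u ∈ Wn b w n) ?_ ?_ ?_ ?_ hu
  · rintro x ⟨l, h1, h2, rfl⟩
    exact Wn_mono b w (by omega) (star_basis b hb hGp φ w hwhit l h1 j hj)
  · simp
  · intro x y _ _ hx hy
    have h : ⁅b j, x + y⁆ - φ ⟨b j, pos_mem hGp hj⟩ • (x + y)
        = (⁅b j, x⁆ - φ ⟨b j, pos_mem hGp hj⟩ • x)
          + (⁅b j, y⁆ - φ ⟨b j, pos_mem hGp hj⟩ • y) := by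
      rw [lie_add, smul_add]; abel
    rw [h]; exact add_mem hx hy
  · intro a x _ hx
    have h : ⁅b j, a • x⁆ - φ ⟨b j, pos_mem hGp hj⟩ • (a • x)
        = a • (⁅b j, x⁆ - φ ⟨b j, pos_mem hGp hj⟩ • x) := by
      rw [lie_smul, smul_sub, smul_comm]
    rw [h]; exact Submodule.smul_mem _ _ hx

include hb hGp hwhit in
lemma star_mem {n : ℤ} (x : Gp) {u : V} (hu : u ∈ Wn b w n) :
    ⁅(x : G), u⁆ - φ x • u ∈ Wn b w n := by
  have hx : (x : G) ∈ Submodule.span ℂ (pgcaPosSet b) := by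
    rw [← hGp]
    exact (LieSubalgebra.mem_toSubmodule Gp).mpr x.2
  have main : ∀ z, z ∈ Submodule.span ℂ (pgcaPosSet b) →
      ∃ hz : z ∈ Gp, ⁅z, u⁆ - φ ⟨z, hz⟩ • u ∈ Wn b w n := by
    intro z hz
    refine Submodule.span_induction
      (p := fun z _ => ∃ hz : z ∈ Gp, ⁅z, u⁆ - φ ⟨z, hz⟩ • u ∈ Wn b w n) ?_ ?_ ?_ ?_ hz
    · rintro y ⟨m, hm, rfl | rfl | rfl | rfl⟩
      · exact ⟨pos_mem hGp hm, star_basis_Wn b hb hGp φ w hwhit (GIdx.L m) hm hu⟩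
      · exact ⟨pos_mem hGp hm, star_basis_Wn b hb hGp φ w hwhit (GIdx.H m) hm hu⟩
      · exact ⟨pos_mem hGp hm, star_basis_Wn b hb hGp φ w hwhit (GIdx.I m) hm hu⟩
      · exact ⟨pos_mem hGp hm, star_basis_Wn b hb hGp φ w hwhit (GIdx.J m) hm hu⟩
    · refine ⟨Gp.zero_mem, ?_⟩
      have h0 : (⟨(0 : G), Gp.zero_mem⟩ : Gp) = 0 := rfl
      rw [h0, map_zero φ, zero_smul, zero_lie, sub_zero]
      exact zero_mem _
    · rintro y z _ _ ⟨hy, py⟩ ⟨hz', pz⟩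
      refine ⟨Gp.add_mem hy hz', ?_⟩
      have h1 : (⟨y + z, Gp.add_mem hy hz'⟩ : Gp) = ⟨y, hy⟩ + ⟨z, hz'⟩ := rfl
      have h2 : ⁅y + z, u⁆ - φ (⟨y, hy⟩ + ⟨z, hz'⟩) • u
          = (⁅y, u⁆ - φ ⟨y, hy⟩ • u) + (⁅z, u⁆ - φ ⟨z, hz'⟩ • u) := by
        rw [add_lie, map_add φ, add_smul]; abel
      rw [h1, h2]
      exact add_mem py pz
    · rintro a y _ ⟨hy, py⟩
      refine ⟨Gp.smul_mem a hy, ?_⟩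
      have h1 : (⟨a • y, Gp.smul_mem a hy⟩ : Gp) = a • (⟨y, hy⟩ : Gp) := rfl
      have h2 : ⁅a • y, u⁆ - φ (a • (⟨y, hy⟩ : Gp)) • u
          = a • (⁅y, u⁆ - φ ⟨y, hy⟩ • u) := by
        rw [smul_lie, map_smul φ, smul_sub, smul_assoc]
      rw [h1, h2]
      exact Submodule.smul_mem _ _ py
  obtain ⟨hz, p⟩ := main _ hx
  exact p

end Star

end WhitAux



open WhitAux in
/-- For any Whittaker `𝒢`-module `V` of type `φ` and any `v ∈ V`, the subspace
`U(𝒢⁺) ⋆ v` is a finite-dimensional `𝒢⁺`-submodule of `V` under the star action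
`x ⋆ u = x·u − φ(x)u`; equivalently, `v` lies in a finite-dimensional subspace stable
under all star operators. -/
theorem whittaker_star_orbit_finiteDimensional {G : Type*} [LieRing G] [LieAlgebra ℂ G]
    (b : Module.Basis GIdx ℂ G) (hb : IsPGCA G b)
    (Gp : LieSubalgebra ℂ G) (hGp : (Gp : Submodule ℂ G) = Submodule.span ℂ (pgcaPosSet b))
    (φ : Gp →ₗ⁅ℂ⁆ ℂ)
    (V : Type*) [AddCommGroup V] [Module ℂ V] [LieRingModule G V] [LieModule ℂ G V]
    (w : V)
    (hwhit : ∀ x : Gp, ⁅(x : G), w⁆ = φ x • w)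
    (hcyc : LieSubmodule.lieSpan ℂ G {w} = ⊤)
    (v : V) :
    ∃ W : Submodule ℂ V, v ∈ W ∧ FiniteDimensional ℂ W ∧
      ∀ x : Gp, ∀ u ∈ W, ⁅(x : G), u⁆ - φ x • u ∈ W := by
  have hdir : Monotone (Wn b w) := fun n m h => Wn_mono b w h
  have hclose : ∀ (x : G) (m : V), m ∈ (⨆ n : ℤ, Wn b w n) →
      ⁅x, m⁆ ∈ (⨆ n : ℤ, Wn b w n) := by
    intro x m hm
    rw [Submodule.mem_iSup_of_directed _ hdir.directed_le] at hm
    obtain ⟨n, hn⟩ := hm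
    have hx : x ∈ Submodule.span ℂ (Set.range b) := by rw [b.span_eq]; trivial
    refine Submodule.span_induction
      (p := fun x _ => ⁅x, m⁆ ∈ ⨆ n : ℤ, Wn b w n) ?_ ?_ ?_ ?_ hx
    · rintro y ⟨i, rfl⟩
      by_cases hi : deg i ≤ 0
      · exact Submodule.mem_iSup_of_mem _ (lie_Wn b w hi hn)
      · push_neg at hi
        have hj : 1 ≤ deg i := hi
        have hst := star_basis_Wn b hb hGp φ w hwhit i hj hn
        have he : ⁅b i, m⁆ = (⁅b i, m⁆ - φ ⟨b i, pos_mem hGp hj⟩ • m)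
            + φ ⟨b i, pos_mem hGp hj⟩ • m := by abel
        rw [he]
        exact Submodule.mem_iSup_of_mem n (add_mem hst (Submodule.smul_mem _ _ hn))
    · show ⁅(0 : G), m⁆ ∈ ⨆ n : ℤ, Wn b w n
      rw [zero_lie]; exact zero_mem _
    · intro y z _ _ hy hz
      show ⁅y + z, m⁆ ∈ ⨆ n : ℤ, Wn b w n
      rw [add_lie]; exact add_mem hy hz
    · intro t y _ hy
      show ⁅t • y, m⁆ ∈ ⨆ n : ℤ, Wn b w n
      rw [smul_lie]; exact Submodule.smul_mem _ _ hy
  let UL : LieSubmodule ℂ G V :=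
    { toSubmodule := ⨆ n : ℤ, Wn b w n
      lie_mem := fun {x m} hm => hclose x m hm }
  have hw0 : w ∈ (⨆ n : ℤ, Wn b w n) :=
    Submodule.mem_iSup_of_mem 0 (mem_Wn (l := []) b w (by simp) (by simp))
  have htop : (⊤ : LieSubmodule ℂ G V) ≤ UL := by
    rw [← hcyc]
    exact LieSubmodule.lieSpan_le.mpr (Set.singleton_subset_iff.mpr hw0)
  have hv : v ∈ (⨆ n : ℤ, Wn b w n) := htop (LieSubmodule.mem_top v)
  rw [Submodule.mem_iSup_of_directed _ hdir.directed_le] at hv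
  obtain ⟨n, hn⟩ := hv
  exact ⟨Wn b w n, hn, finiteDimensional_Wn b w n,
    fun x u hu => star_mem b hb hGp φ w hwhit x hu⟩
end

section
/- Let φ : 𝒢⁺ → ℂ be a Lie algebra homomorphism, V a Whittaker 𝒢-module of type φ, and S ⊆ V a nonzero 𝒢-submodule. Then S contains a nonzero Whittaker vector, i.e., a nonzero w' ∈ S with x·w' = ψ(x)w' for some Lie algebra homomorphism ψ : 𝒢⁺ → ℂ and all x ∈ 𝒢⁺. -/
set_option linter.unusedSectionVars false
set_option linter.unusedVariables false


attribute [local instance 100] LieRing.ofAssociativeRing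


namespace PGCAaux

/-- degree of a basis index -/
def dg : GIdx → ℤ
  | .L m => m
  | .H m => m
  | .I m => m
  | .J m => m

section Alg

variable {G : Type*} [LieRing G] [LieAlgebra ℂ G] (b : Module.Basis GIdx ℂ G)

/-- structure constants: the bracket of two basis vectors is a scalar multiple of a basis
vector whose degree is the sum of the degrees. -/
lemma brkt (hb : IsPGCA G b) (i j : GIdx) :
    ∃ c : ℂ, ∃ k : GIdx, ⁅b i, b j⁆ = c • b k ∧ dg k = dg i + dg j := by
  have sk : ∀ (i j : GIdx) (c : ℂ) (k : GIdx), ⁅b i, b j⁆ = c • b k → ⁅b j, b i⁆ = (-c) • b k := by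
    intro i j c k h
    rw [← lie_skew, h, neg_smul]
  cases i with
  | L n =>
    cases j with
    | L m => exact ⟨(m : ℂ) - n, .L (m + n), hb.lie_LL n m, by simp [dg]; ring⟩
    | H m => exact ⟨(m : ℂ), .H (m + n), hb.lie_LH n m, by simp [dg]; ring⟩
    | I m => exact ⟨(m : ℂ) - n, .I (m + n), hb.lie_LI n m, by simp [dg]; ring⟩
    | J m => exact ⟨(m : ℂ) - n, .J (m + n), hb.lie_LJ n m, by simp [dg]; ring⟩
  | H n =>
    cases j with
    | L m => exact ⟨-(n : ℂ), .H (n + m), sk _ _ _ _ (hb.lie_LH m n), by simp [dg]⟩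
    | H m => exact ⟨0, .H (m + n), by rw [hb.lie_HH, zero_smul], by simp [dg]; ring⟩
    | I m => exact ⟨1, .I (m + n), by rw [hb.lie_HI, one_smul], by simp [dg]; ring⟩
    | J m => exact ⟨-1, .J (m + n), by rw [hb.lie_HJ, neg_smul, one_smul], by simp [dg]; ring⟩
  | I n =>
    cases j with
    | L m => exact ⟨-((n : ℂ) - m), .I (n + m), sk _ _ _ _ (hb.lie_LI m n), by simp [dg]⟩
    | H m => exact ⟨-1, .I (n + m), sk _ _ _ _ (by rw [hb.lie_HI, one_smul]), by simp [dg]⟩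
    | I m => exact ⟨0, .I (m + n), by rw [hb.lie_II, zero_smul], by simp [dg]; ring⟩
    | J m => exact ⟨0, .J (m + n), by rw [hb.lie_IJ, zero_smul], by simp [dg]; ring⟩
  | J n =>
    cases j with
    | L m => exact ⟨-((n : ℂ) - m), .J (n + m), sk _ _ _ _ (hb.lie_LJ m n), by simp [dg]⟩
    | H m => exact ⟨1, .J (n + m), by
        have := sk _ _ _ _ (by rw [hb.lie_HJ, ← neg_one_smul ℂ (b (GIdx.J (n + m)))] :
          ⁅b (GIdx.H m), b (GIdx.J n)⁆ = (-1 : ℂ) • b (GIdx.J (n + m)))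
        simpa using this, by simp [dg]⟩
    | I m => exact ⟨0, .I (m + n), by rw [← lie_skew, hb.lie_IJ, neg_zero, zero_smul], by simp [dg]; ring⟩
    | J m => exact ⟨0, .J (m + n), by rw [hb.lie_JJ, zero_smul], by simp [dg]; ring⟩

variable (Gp : LieSubalgebra ℂ G)

lemma mem_Gp (hGp : (Gp : Submodule ℂ G) = Submodule.span ℂ (pgcaPosSet b))
    {i : GIdx} (hi : 1 ≤ dg i) : b i ∈ Gp := by
  rw [← LieSubalgebra.mem_toSubmodule, hGp]
  refine Submodule.subset_span ?_
  cases i with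
  | L m => exact ⟨m, hi, Or.inl rfl⟩
  | H m => exact ⟨m, hi, Or.inr (Or.inl rfl)⟩
  | I m => exact ⟨m, hi, Or.inr (Or.inr (Or.inl rfl))⟩
  | J m => exact ⟨m, hi, Or.inr (Or.inr (Or.inr rfl))⟩

variable (φ : Gp →ₗ⁅ℂ⁆ ℂ)

open scoped Classical in
/-- extension of `φ` to indices (zero off `Gp`) -/
noncomputable def phih (i : GIdx) : ℂ :=
  if h : b i ∈ Gp then φ ⟨b i, h⟩ else 0

lemma phih_pos {i : GIdx} (h : b i ∈ Gp) : phih b Gp φ i = φ ⟨b i, h⟩ := dif_pos h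

lemma lie_complex (a c : ℂ) : ⁅a, c⁆ = 0 := by
  rw [Ring.lie_def, mul_comm, sub_self]

lemma phih_vanish (hb : IsPGCA G b) (hGp : (Gp : Submodule ℂ G) = Submodule.span ℂ (pgcaPosSet b))
    {i : GIdx} (hi : 3 ≤ dg i) : phih b Gp φ i = 0 := by
  have key : ∀ (x y : Gp) (c : ℂ) (h : b i ∈ Gp), ⁅(x : G), (y : G)⁆ = c • b i → c ≠ 0 →
      phih b Gp φ i = 0 := by
    intro x y c h hxy hc
    have hbr : ⁅x, y⁆ = c • (⟨b i, h⟩ : Gp) := by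
      apply Subtype.ext
      rw [LieSubalgebra.coe_bracket, hxy]; rfl
    have := φ.map_lie x y
    rw [hbr, lie_complex] at this
    rw [map_smul] at this
    rw [phih_pos b Gp φ h]
    rw [smul_eq_mul] at this
    rcases mul_eq_zero.mp this with h' | h'
    · exact absurd h' hc
    · exact h'
  cases i with
  | L m =>
    simp only [dg] at hi
    have h1 : b (GIdx.L 1) ∈ Gp := mem_Gp b Gp hGp (by simp [dg])
    have h2 : b (GIdx.L (m - 1)) ∈ Gp := mem_Gp b Gp hGp (by simp [dg]; omega)
    have h3 : b (GIdx.L m) ∈ Gp := mem_Gp b Gp hGp (by simp [dg]; omega)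
    refine key ⟨_, h1⟩ ⟨_, h2⟩ ((m : ℂ) - 2) h3 ?_ ?_
    · have := hb.lie_LL 1 (m - 1)
      have e : m - 1 + 1 = m := by ring
      rw [e] at this
      rw [this]
      congr 1
      push_cast
      ring
    · intro hc
      have : (m : ℂ) = 2 := by linear_combination hc
      have : m = 2 := by exact_mod_cast this
      omega
  | H m =>
    simp only [dg] at hi
    have h1 : b (GIdx.L 1) ∈ Gp := mem_Gp b Gp hGp (by simp [dg])
    have h2 : b (GIdx.H (m - 1)) ∈ Gp := mem_Gp b Gp hGp (by simp [dg]; omega)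
    have h3 : b (GIdx.H m) ∈ Gp := mem_Gp b Gp hGp (by simp [dg]; omega)
    refine key ⟨_, h1⟩ ⟨_, h2⟩ ((m : ℂ) - 1) h3 ?_ ?_
    · have := hb.lie_LH 1 (m - 1)
      have e : m - 1 + 1 = m := by ring
      rw [e] at this
      rw [this]
      congr 1
      push_cast
      ring
    · intro hc
      have : (m : ℂ) = 1 := by linear_combination hc
      have : m = 1 := by exact_mod_cast this
      omega
  | I m =>
    simp only [dg] at hi
    have h1 : b (GIdx.H 1) ∈ Gp := mem_Gp b Gp hGp (by simp [dg])
    have h2 : b (GIdx.I (m - 1)) ∈ Gp := mem_Gp b Gp hGp (by simp [dg]; omega)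
    have h3 : b (GIdx.I m) ∈ Gp := mem_Gp b Gp hGp (by simp [dg]; omega)
    refine key ⟨_, h1⟩ ⟨_, h2⟩ 1 h3 ?_ one_ne_zero
    · have := hb.lie_HI 1 (m - 1)
      have e : m - 1 + 1 = m := by ring
      rw [e] at this
      rw [this, one_smul]
  | J m =>
    simp only [dg] at hi
    have h1 : b (GIdx.H 1) ∈ Gp := mem_Gp b Gp hGp (by simp [dg])
    have h2 : b (GIdx.J (m - 1)) ∈ Gp := mem_Gp b Gp hGp (by simp [dg]; omega)
    have h3 : b (GIdx.J m) ∈ Gp := mem_Gp b Gp hGp (by simp [dg]; omega)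
    refine key ⟨_, h1⟩ ⟨_, h2⟩ (-1) h3 ?_ (by norm_num)
    · have := hb.lie_HJ 1 (m - 1)
      have e : m - 1 + 1 = m := by ring
      rw [e] at this
      rw [this, neg_smul, one_smul]

end Alg

end PGCAaux

namespace PGCAaux

section Mod

variable {G : Type*} [LieRing G] [LieAlgebra ℂ G] (b : Module.Basis GIdx ℂ G)
variable {V : Type*} [AddCommGroup V] [Module ℂ V] [LieRingModule G V] [LieModule ℂ G V] (w : V)

/-- iterated bracket action of a list of basis indices -/
noncomputable def act (l : List GIdx) (v : V) : V := l.foldr (fun i u => ⁅b i, u⁆) v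

/-- monomial vector -/
noncomputable def mon (l : List GIdx) : V := act b l w

/-- total degree of a list -/
def degl (l : List GIdx) : ℤ := (l.map dg).sum

@[simp] lemma act_nil (v : V) : act b [] v = v := rfl
@[simp] lemma act_cons (i : GIdx) (l : List GIdx) (v : V) :
    act b (i :: l) v = ⁅b i, act b l v⁆ := rfl
lemma act_append (p q : List GIdx) (v : V) : act b (p ++ q) v = act b p (act b q v) :=
  List.foldr_append

@[simp] lemma act_zero (p : List GIdx) : act b p (0 : V) = 0 := by
  induction p with
  | nil => rfl
  | cons i t ih => simp [ih]

lemma act_add (p : List GIdx) (u v : V) : act b p (u + v) = act b p u + act b p v := by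
  induction p with
  | nil => rfl
  | cons i t ih => simp [ih]

lemma act_smul (p : List GIdx) (c : ℂ) (v : V) : act b p (c • v) = c • act b p v := by
  induction p with
  | nil => rfl
  | cons i t ih => simp [ih]

@[simp] lemma mon_nil : mon b w [] = w := rfl
@[simp] lemma mon_cons (i : GIdx) (l : List GIdx) : mon b w (i :: l) = ⁅b i, mon b w l⁆ := rfl
lemma mon_append (p q : List GIdx) : mon b w (p ++ q) = act b p (mon b w q) := act_append _ _ _ _

@[simp] lemma degl_nil : degl ([] : List GIdx) = 0 := rfl
@[simp] lemma degl_cons (i : GIdx) (l : List GIdx) : degl (i :: l) = dg i + degl l := by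
  simp [degl]
@[simp] lemma degl_append (p q : List GIdx) : degl (p ++ q) = degl p + degl q := by
  simp [degl]

lemma degl_le {l : List GIdx} (h : ∀ a ∈ l, dg a ≤ 2) : degl l ≤ 2 * l.length := by
  induction l with
  | nil => simp
  | cons i t ih =>
    have := h i (by simp)
    have := ih (fun a ha => h a (by simp [ha]))
    simp only [degl_cons, List.length_cons]
    push_cast
    omega

/-- span of normal monomials: length at most `n`, total degree `d`, all factors of degree at
most `2`. -/
def FF (n : ℕ) (d : ℤ) : Submodule ℂ V :=
  Submodule.span ℂ {v | ∃ l : List GIdx, v = mon b w l ∧ l.length ≤ n ∧ degl l = d ∧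
    ∀ a ∈ l, dg a ≤ 2}

lemma FF_mono {n n' : ℕ} (h : n ≤ n') (d : ℤ) : FF b w n d ≤ FF b w n' d :=
  Submodule.span_mono (fun v ⟨l, h1, h2, h3, h4⟩ => ⟨l, h1, h2.trans h, h3, h4⟩)

lemma FF_eq_bot {n : ℕ} {d : ℤ} (h : 2 * (n : ℤ) < d) : FF b w n d = ⊥ := by
  rw [FF, Submodule.span_eq_bot]
  rintro v ⟨l, rfl, h2, h3, h4⟩
  exfalso
  have := degl_le h4
  have : (l.length : ℤ) ≤ n := by exact_mod_cast h2
  omega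

end Mod

end PGCAaux

namespace PGCAaux

section ModAlg

variable {G : Type*} [LieRing G] [LieAlgebra ℂ G] (b : Module.Basis GIdx ℂ G)
variable (Gp : LieSubalgebra ℂ G) (φ : Gp →ₗ⁅ℂ⁆ ℂ)
variable {V : Type*} [AddCommGroup V] [Module ℂ V] [LieRingModule G V] [LieModule ℂ G V] (w : V)

variable (hb : IsPGCA G b) (hGp : (Gp : Submodule ℂ G) = Submodule.span ℂ (pgcaPosSet b))
variable (hwhit : ∀ x : Gp, ⁅(x : G), w⁆ = φ x • w)

include hb hGp hwhit

lemma hw_pos {i : GIdx} (hi : 1 ≤ dg i) :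
    ⁅b i, w⁆ = phih b Gp φ i • w := by
  have hmem : b i ∈ Gp := mem_Gp b Gp hGp hi
  have := hwhit ⟨b i, hmem⟩
  rw [phih_pos b Gp φ hmem]
  exact this

lemma hw_zero {i : GIdx} (hi : 3 ≤ dg i) : ⁅b i, w⁆ = 0 := by
  rw [hw_pos b Gp φ w hb hGp hwhit (by omega), phih_vanish b Gp φ hb hGp hi, zero_smul]

lemma monE : ∀ (N : ℕ) (l : List GIdx), l.length ≤ N → mon b w l ∈ FF b w l.length (degl l) := by
  intro N
  induction N with
  | zero =>
    intro l hl
    rw [List.length_eq_zero_iff.mp (Nat.le_zero.mp hl)]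
    exact Submodule.subset_span ⟨[], rfl, by simp, by simp, by simp⟩
  | succ N IH =>
    intro l hl
    by_cases hall : ∀ a ∈ l, dg a ≤ 2
    · exact Submodule.subset_span ⟨l, rfl, le_rfl, rfl, hall⟩
    · push_neg at hall
      obtain ⟨a, hal, ha2⟩ := hall
      have ha3 : 3 ≤ dg a := by omega
      obtain ⟨p, s, rfl⟩ := List.append_of_mem hal
      have aux : ∀ s' : List GIdx, ∀ p : List GIdx, (p ++ a :: s').length ≤ N + 1 →
          mon b w (p ++ a :: s') ∈ FF b w (p ++ a :: s').length (degl (p ++ a :: s')) := by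
        intro s'
        induction s' with
        | nil =>
          intro p hlen
          have hz : mon b w (p ++ [a]) = 0 := by
            rw [mon_append]
            have h1 : mon b w [a] = (0 : V) := by
              show ⁅b a, w⁆ = 0
              exact hw_zero b Gp φ w hb hGp hwhit ha3
            rw [h1, act_zero]
          rw [hz]
          exact zero_mem _
        | cons x s'' IHs =>
          intro p hlen
          obtain ⟨c, k, hck, hdk⟩ := brkt b hb a x
          have hu : mon b w (p ++ a :: x :: s'') =
              mon b w (p ++ x :: a :: s'') + c • mon b w (p ++ k :: s'') := by
            rw [mon_append, mon_append, mon_append]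
            have e1 : mon b w (a :: x :: s'') =
                mon b w (x :: a :: s'') + c • mon b w (k :: s'') := by
              simp only [mon_cons]
              rw [leibniz_lie, hck, smul_lie]
              abel
            rw [e1, act_add, act_smul]
          rw [hu]
          refine add_mem ?_ (Submodule.smul_mem _ _ ?_)
          · have hlen2 : ((p ++ [x]) ++ a :: s'').length ≤ N + 1 := by
              simp only [List.length_append, List.length_cons, List.length_nil] at hlen ⊢
              omega
            have this1 := IHs (p ++ [x]) hlen2
            have e : (p ++ [x]) ++ a :: s'' = p ++ x :: a :: s'' := by simp
            rw [e] at this1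
            have hlen_eq : (p ++ x :: a :: s'').length = (p ++ a :: x :: s'').length := by simp
            have hdeg_eq : degl (p ++ x :: a :: s'') = degl (p ++ a :: x :: s'') := by
              simp only [degl_append, degl_cons]
              ring
            rw [hlen_eq, hdeg_eq] at this1
            exact this1
          · have hlen3 : (p ++ k :: s'').length ≤ N := by
              simp only [List.length_append, List.length_cons, List.length_nil] at hlen ⊢
              omega
            have this2 := IH (p ++ k :: s'') hlen3
            have hd2 : degl (p ++ k :: s'') = degl (p ++ a :: x :: s'') := by
              simp only [degl_append, degl_cons, hdk]
              ring
            rw [hd2] at this2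
            refine FF_mono b w ?_ _ this2
            simp only [List.length_append, List.length_cons]
            omega
      exact aux s p hl

lemma lie_mem_FF (x : GIdx) {n : ℕ} {d : ℤ} {v : V} (hv : v ∈ FF b w n d) :
    ⁅b x, v⁆ ∈ FF b w (n + 1) (dg x + d) := by
  induction hv using Submodule.span_induction with
  | mem v hv =>
    obtain ⟨l, rfl, h1, h2, h3⟩ := hv
    rw [← mon_cons]
    have := monE b Gp φ w hb hGp hwhit (x :: l).length (x :: l) le_rfl
    have hd : degl (x :: l) = dg x + d := by rw [degl_cons, h2]
    rw [hd] at this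
    refine FF_mono b w ?_ _ this
    simpa using Nat.succ_le_succ h1
  | zero => rw [lie_zero]; exact zero_mem _
  | add u v hu hv ihu ihv => rw [lie_add]; exact add_mem ihu ihv
  | smul c u hu ihu => rw [lie_smul]; exact Submodule.smul_mem _ _ ihu

lemma actC : ∀ (l : List GIdx) (i : GIdx), 1 ≤ dg i →
    ⁅b i, mon b w l⁆ - phih b Gp φ i • mon b w l ∈ FF b w l.length (degl l + dg i) := by
  intro l
  induction l with
  | nil =>
    intro i hi
    rw [mon_nil, hw_pos b Gp φ w hb hGp hwhit hi, sub_self]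
    exact zero_mem _
  | cons x t IH =>
    intro i hi
    obtain ⟨c, k, hck, hdk⟩ := brkt b hb i x
    have hA := IH i hi
    set A := ⁅b i, mon b w t⁆ - phih b Gp φ i • mon b w t with hAdef
    have expand : ⁅b i, mon b w (x :: t)⁆ - phih b Gp φ i • mon b w (x :: t) =
        c • mon b w (k :: t) + ⁅b x, A⁆ := by
      simp only [mon_cons]
      rw [leibniz_lie, hck, smul_lie]
      have : ⁅b i, mon b w t⁆ = A + phih b Gp φ i • mon b w t := by
        rw [hAdef]; abel
      rw [this, lie_add, lie_smul]
      abel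
    rw [expand]
    refine add_mem (Submodule.smul_mem _ _ ?_) ?_
    · have := monE b Gp φ w hb hGp hwhit (k :: t).length (k :: t) le_rfl
      have hd : degl (k :: t) = degl (x :: t) + dg i := by
        simp only [degl_cons, hdk]
        ring
      rw [hd] at this
      exact FF_mono b w (by simp) _ this
    · have := lie_mem_FF b Gp φ w hb hGp hwhit x hA
      have hd : dg x + (degl t + dg i) = degl (x :: t) + dg i := by
        simp only [degl_cons]; ring
      rw [hd] at this
      simpa using this

end ModAlg

end PGCAaux

namespace PGCAaux

section Span

variable {G : Type*} [LieRing G] [LieAlgebra ℂ G] (b : Module.Basis GIdx ℂ G)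
variable (Gp : LieSubalgebra ℂ G) (φ : Gp →ₗ⁅ℂ⁆ ℂ)
variable {V : Type*} [AddCommGroup V] [Module ℂ V] [LieRingModule G V] [LieModule ℂ G V] (w : V)

lemma span_mon_top (hcyc : LieSubmodule.lieSpan ℂ G {w} = ⊤) (v : V) :
    v ∈ Submodule.span ℂ (Set.range (mon b w)) := by
  set P := Submodule.span ℂ (Set.range (mon b w)) with hP
  have h1 : ∀ (i : GIdx) (m : V), m ∈ P → ⁅b i, m⁆ ∈ P := by
    intro i m hm
    induction hm using Submodule.span_induction with
    | mem u hu =>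
      obtain ⟨l, rfl⟩ := hu
      rw [← mon_cons]
      exact Submodule.subset_span ⟨i :: l, rfl⟩
    | zero => rw [lie_zero]; exact zero_mem _
    | add u v hu hv ihu ihv => rw [lie_add]; exact add_mem ihu ihv
    | smul c u hu ihu => rw [lie_smul]; exact Submodule.smul_mem _ _ ihu
  have h2 : ∀ (g : G) (m : V), m ∈ P → ⁅g, m⁆ ∈ P := by
    intro g m hm
    have hg : g ∈ Submodule.span ℂ (Set.range ⇑b) := by
      rw [b.span_eq]; trivial
    induction hg using Submodule.span_induction with
    | mem u hu =>
      obtain ⟨i, rfl⟩ := hu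
      exact h1 i m hm
    | zero => rw [zero_lie]; exact zero_mem _
    | add x y hx hy ihx ihy => rw [add_lie]; exact add_mem ihx ihy
    | smul c x hx ihx => rw [smul_lie]; exact Submodule.smul_mem _ _ ihx
  let N : LieSubmodule ℂ G V := { toSubmodule := P, lie_mem := fun {g m} hm => h2 g m hm }
  have hle : LieSubmodule.lieSpan ℂ G {w} ≤ N := by
    rw [LieSubmodule.lieSpan_le]
    intro u hu
    rcases hu with rfl
    exact Submodule.subset_span ⟨[], rfl⟩
  rw [hcyc] at hle
  exact hle (LieSubmodule.mem_top v)

/-- window span: monomials of bounded length, degree at least `D`, normal factors -/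
noncomputable def WW (n : ℕ) (D : ℤ) : Submodule ℂ V :=
  Submodule.span ℂ {v | ∃ l : List GIdx, v = mon b w l ∧ l.length ≤ n ∧ D ≤ degl l ∧
    ∀ a ∈ l, dg a ≤ 2}

lemma FF_le_WW {m n : ℕ} {d D : ℤ} (hm : m ≤ n) (hd : D ≤ d) : FF b w m d ≤ WW b w n D :=
  Submodule.span_mono (fun v ⟨l, h1, h2, h3, h4⟩ =>
    ⟨l, h1, h2.trans hm, h3 ▸ hd, h4⟩)

lemma finite_lists : ∀ (n : ℕ) (A : Set GIdx), A.Finite →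
    {l : List GIdx | l.length ≤ n ∧ ∀ a ∈ l, a ∈ A}.Finite := by
  intro n
  induction n with
  | zero =>
    intro A hA
    refine Set.Finite.subset (Set.finite_singleton []) ?_
    rintro l ⟨h1, h2⟩
    simp [List.length_eq_zero_iff.mp (Nat.le_zero.mp h1)]
  | succ n ih =>
    intro A hA
    refine Set.Finite.subset (Set.Finite.union (Set.finite_singleton ([] : List GIdx))
      (Set.Finite.image2 List.cons hA (ih A hA))) ?_
    rintro l ⟨h1, h2⟩
    cases l with
    | nil => exact Or.inl rfl
    | cons a t =>
      refine Or.inr (Set.mem_image2_of_mem (h2 a (by simp)) ⟨?_, fun x hx => h2 x (by simp [hx])⟩)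
      simpa using h1

lemma dg_lower {l : List GIdx} {a : GIdx} (ha : a ∈ l) (h2 : ∀ x ∈ l, dg x ≤ 2) :
    degl l ≤ dg a + 2 * (l.length : ℤ) - 2 := by
  obtain ⟨p, s, rfl⟩ := List.append_of_mem ha
  have hp : degl p ≤ 2 * p.length := degl_le (fun x hx => h2 x (by simp [hx]))
  have hs : degl s ≤ 2 * s.length := degl_le (fun x hx => h2 x (by simp [hx]))
  simp only [degl_append, degl_cons, List.length_append, List.length_cons]
  push_cast
  omega

lemma WW_fd (n : ℕ) (D : ℤ) : FiniteDimensional ℂ (WW b w n D) := by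
  set A : Set GIdx := {i : GIdx | D - 2 * n ≤ dg i ∧ dg i ≤ 2} with hA
  have hAfin : A.Finite := by
    have hsub : A ⊆ (fun p : Fin 4 × ℤ =>
        match p.1 with
        | 0 => GIdx.L p.2
        | 1 => GIdx.H p.2
        | 2 => GIdx.I p.2
        | _ => GIdx.J p.2) '' ((Set.univ : Set (Fin 4)) ×ˢ Set.Icc (D - 2 * n) 2) := by
      rintro i ⟨hi1, hi2⟩
      cases i with
      | L m => exact ⟨(0, m), ⟨trivial, hi1, hi2⟩, rfl⟩
      | H m => exact ⟨(1, m), ⟨trivial, hi1, hi2⟩, rfl⟩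
      | I m => exact ⟨(2, m), ⟨trivial, hi1, hi2⟩, rfl⟩
      | J m => exact ⟨(3, m), ⟨trivial, hi1, hi2⟩, rfl⟩
    exact Set.Finite.subset (Set.Finite.image _ (Set.finite_univ.prod (Set.finite_Icc _ _))) hsub
  have hLfin : {l : List GIdx | l.length ≤ n ∧ ∀ a ∈ l, a ∈ A}.Finite := finite_lists n A hAfin
  have hle : WW b w n D ≤ Submodule.span ℂ
      (mon b w '' {l : List GIdx | l.length ≤ n ∧ ∀ a ∈ l, a ∈ A}) := by
    apply Submodule.span_mono
    rintro v ⟨l, rfl, h1, h2, h3⟩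
    refine ⟨l, ⟨h1, fun a ha => ⟨?_, h3 a ha⟩⟩, rfl⟩
    have := dg_lower ha h3
    have hln : (l.length : ℤ) ≤ n := by exact_mod_cast h1
    omega
  have : FiniteDimensional ℂ (Submodule.span ℂ
      (mon b w '' {l : List GIdx | l.length ≤ n ∧ ∀ a ∈ l, a ∈ A})) :=
    FiniteDimensional.span_of_finite ℂ (hLfin.image _)
  exact Submodule.finiteDimensional_of_le hle

variable (hb : IsPGCA G b) (hGp : (Gp : Submodule ℂ G) = Submodule.span ℂ (pgcaPosSet b))
variable (hwhit : ∀ x : Gp, ⁅(x : G), w⁆ = φ x • w)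

include hb hGp hwhit

lemma WW_inv {n : ℕ} {D : ℤ} {i : GIdx} (hi : 1 ≤ dg i) {v : V} (hv : v ∈ WW b w n D) :
    ⁅b i, v⁆ ∈ WW b w n D := by
  induction hv using Submodule.span_induction with
  | mem u hu =>
    obtain ⟨l, rfl, h1, h2, h3⟩ := hu
    have hsplit : ⁅b i, mon b w l⁆ =
        (⁅b i, mon b w l⁆ - phih b Gp φ i • mon b w l) + phih b Gp φ i • mon b w l := by abel
    rw [hsplit]
    refine add_mem ?_ (Submodule.smul_mem _ _ (Submodule.subset_span ⟨l, rfl, h1, h2, h3⟩))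
    refine FF_le_WW b w h1 (by omega) (actC b Gp φ w hb hGp hwhit l i hi)
  | zero => rw [lie_zero]; exact zero_mem _
  | add u v hu hv ihu ihv => rw [lie_add]; exact add_mem ihu ihv
  | smul c u hu ihu => rw [lie_smul]; exact Submodule.smul_mem _ _ ihu

lemma WW_inv_Gp {n : ℕ} {D : ℤ} (x : Gp) {v : V} (hv : v ∈ WW b w n D) :
    ⁅(x : G), v⁆ ∈ WW b w n D := by
  have hx : (x : G) ∈ Submodule.span ℂ (pgcaPosSet b) := by
    rw [← hGp]; exact x.2
  suffices h : ∀ g ∈ Submodule.span ℂ (pgcaPosSet b), ⁅g, v⁆ ∈ WW b w n D from h _ hx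
  intro g hg
  induction hg using Submodule.span_induction with
  | mem g hg =>
    obtain ⟨m, hm, hcases⟩ := hg
    rcases hcases with rfl | rfl | rfl | rfl <;>
      exact WW_inv b Gp φ w hb hGp hwhit (by simpa [dg] using hm) hv
  | zero => rw [zero_lie]; exact zero_mem _
  | add x y hx hy ihx ihy => rw [add_lie]; exact add_mem ihx ihy
  | smul c x hx ihx => rw [smul_lie]; exact Submodule.smul_mem _ _ ihx

end Span

section Filt

variable {G : Type*} [LieRing G] [LieAlgebra ℂ G] (b : Module.Basis GIdx ℂ G)

/-- degree filtration of the positive part -/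
def Pf (k : ℤ) : Submodule ℂ G := Submodule.span ℂ {v | ∃ i : GIdx, k ≤ dg i ∧ v = b i}

lemma posSet_eq : pgcaPosSet b = {v | ∃ i : GIdx, 1 ≤ dg i ∧ v = b i} := by
  ext v
  constructor
  · rintro ⟨m, hm, (rfl | rfl | rfl | rfl)⟩
    exacts [⟨.L m, hm, rfl⟩, ⟨.H m, hm, rfl⟩, ⟨.I m, hm, rfl⟩, ⟨.J m, hm, rfl⟩]
  · rintro ⟨i, hi, rfl⟩
    cases i with
    | L m => exact ⟨m, hi, Or.inl rfl⟩
    | H m => exact ⟨m, hi, Or.inr (Or.inl rfl)⟩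
    | I m => exact ⟨m, hi, Or.inr (Or.inr (Or.inl rfl))⟩
    | J m => exact ⟨m, hi, Or.inr (Or.inr (Or.inr rfl))⟩

lemma Pf_antitone {j k : ℤ} (h : j ≤ k) : Pf b k ≤ Pf b j :=
  Submodule.span_mono (fun v ⟨i, hi, hv⟩ => ⟨i, h.trans hi, hv⟩)

lemma lie_Pf (hb : IsPGCA G b) {j k : ℤ} {x y : G} (hx : x ∈ Pf b j) (hy : y ∈ Pf b k) :
    ⁅x, y⁆ ∈ Pf b (j + k) := by
  induction hx using Submodule.span_induction with
  | mem u hu =>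
    obtain ⟨i1, hi1, rfl⟩ := hu
    induction hy using Submodule.span_induction with
    | mem v hv =>
      obtain ⟨i2, hi2, rfl⟩ := hv
      obtain ⟨c, k', hck, hdk⟩ := brkt b hb i1 i2
      rw [hck]
      exact Submodule.smul_mem _ _ (Submodule.subset_span ⟨k', by omega, rfl⟩)
    | zero => rw [lie_zero]; exact zero_mem _
    | add u v hu hv ihu ihv => rw [lie_add]; exact add_mem ihu ihv
    | smul c u hu ihu => rw [lie_smul]; exact Submodule.smul_mem _ _ ihu
  | zero => rw [zero_lie]; exact zero_mem _
  | add u v hu hv ihu ihv => rw [add_lie]; exact add_mem ihu ihv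
  | smul c u hu ihu => rw [smul_lie]; exact Submodule.smul_mem _ _ ihu

end Filt

section Kill

variable {G : Type*} [LieRing G] [LieAlgebra ℂ G] (b : Module.Basis GIdx ℂ G)
variable (Gp : LieSubalgebra ℂ G) (φ : Gp →ₗ⁅ℂ⁆ ℂ)
variable {V : Type*} [AddCommGroup V] [Module ℂ V] [LieRingModule G V] [LieModule ℂ G V] (w : V)
variable (hb : IsPGCA G b) (hGp : (Gp : Submodule ℂ G) = Submodule.span ℂ (pgcaPosSet b))
variable (hwhit : ∀ x : Gp, ⁅(x : G), w⁆ = φ x • w)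

include hb hGp hwhit

lemma kill {n : ℕ} {D : ℤ} {M0 : ℤ} (h3 : 3 ≤ M0) (hM : 2 * (n : ℤ) < D + M0) :
    ∀ g ∈ Pf b M0, ∀ u ∈ WW b w n D, ⁅g, u⁆ = 0 := by
  intro g hg
  induction hg using Submodule.span_induction with
  | mem g0 hg0 =>
    obtain ⟨i, hi, rfl⟩ := hg0
    intro u hu
    induction hu using Submodule.span_induction with
    | mem u0 hu0 =>
      obtain ⟨l, rfl, h1, h2, h3'⟩ := hu0
      have hmem := actC b Gp φ w hb hGp hwhit l i (by omega)
      have hbot : FF b w l.length (degl l + dg i) = ⊥ := by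
        apply FF_eq_bot
        have hln : (l.length : ℤ) ≤ n := by exact_mod_cast h1
        omega
      rw [hbot, Submodule.mem_bot, sub_eq_zero] at hmem
      rw [hmem, phih_vanish b Gp φ hb hGp (by omega), zero_smul]
    | zero => rw [lie_zero]
    | add u v hu hv ihu ihv => rw [lie_add, ihu, ihv, add_zero]
    | smul c u hu ihu => rw [lie_smul, ihu, smul_zero]
  | zero => intro u hu; rw [zero_lie]
  | add x y hx hy ihx ihy => intro u hu; rw [add_lie, ihx u hu, ihy u hu, add_zero]
  | smul c x hx ihx => intro u hu; rw [smul_lie, ihx u hu, smul_zero]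

end Kill

end PGCAaux


set_option maxHeartbeats 1000000 in
set_option synthInstance.maxHeartbeats 400000 in
open PGCAaux in
/-- Every nonzero submodule `S` of a Whittaker `𝒢`-module `V` contains a nonzero
Whittaker vector, i.e. a nonzero `w' ∈ S` with `x·w' = ψ(x)w'` for some Lie algebra
homomorphism `ψ : 𝒢⁺ → ℂ`. -/
theorem whittaker_submodule_has_whittaker_vector {G : Type*} [LieRing G] [LieAlgebra ℂ G]
    (b : Module.Basis GIdx ℂ G) (hb : IsPGCA G b)
    (Gp : LieSubalgebra ℂ G) (hGp : (Gp : Submodule ℂ G) = Submodule.span ℂ (pgcaPosSet b))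
    (φ : Gp →ₗ⁅ℂ⁆ ℂ)
    (V : Type*) [AddCommGroup V] [Module ℂ V] [LieRingModule G V] [LieModule ℂ G V]
    (w : V)
    (hwhit : ∀ x : Gp, ⁅(x : G), w⁆ = φ x • w)
    (hcyc : LieSubmodule.lieSpan ℂ G {w} = ⊤)
    (S : LieSubmodule ℂ G V) (hS : S ≠ ⊥) :
    ∃ w' ∈ S, w' ≠ 0 ∧ ∃ ψ : Gp →ₗ⁅ℂ⁆ ℂ, ∀ x : Gp, ⁅(x : G), w'⁆ = ψ x • w' := by
  classical
  -- pick a nonzero element of S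
  obtain ⟨v, hvS, hv0⟩ : ∃ v ∈ S, v ≠ 0 := by
    by_contra h
    push_neg at h
    exact hS ((LieSubmodule.eq_bot_iff S).mpr h)
  -- decompose v into finitely many monomials
  have hvspan := span_mon_top b w hcyc v
  obtain ⟨t, htsub, hvt⟩ := Submodule.mem_span_finite_of_mem_span hvspan
  have htne : t.Nonempty := by
    rcases Finset.eq_empty_or_nonempty t with rfl | h
    · exfalso
      rw [Finset.coe_empty, Submodule.span_empty, Submodule.mem_bot] at hvt
      exact hv0 hvt
    · exact h
  have hpick : ∀ u ∈ t, ∃ l : List GIdx, mon b w l = u := fun u hu => htsub hu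
  choose f hf using hpick
  set n : ℕ := t.attach.sup (fun u => (f u.1 u.2).length) with hn
  have hattne : t.attach.Nonempty := Finset.attach_nonempty_iff.mpr htne
  set D : ℤ := t.attach.inf' hattne (fun u => degl (f u.1 u.2)) with hD
  -- v lies in the window space
  have hvW : v ∈ WW b w n D := by
    refine Submodule.span_le.mpr ?_ hvt
    intro u hu
    have hu' : u ∈ t := hu
    rw [← hf u hu']
    refine FF_le_WW b w ?_ ?_ (monE b Gp φ w hb hGp hwhit _ _ le_rfl)
    · exact Finset.le_sup (f := fun u : {x // x ∈ t} => (f u.1 u.2).length)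
        (Finset.mem_attach t ⟨u, hu'⟩)
    · exact Finset.inf'_le _ (Finset.mem_attach t ⟨u, hu'⟩)
  set M0 : ℤ := max 3 (2 * (n : ℤ) - D + 1) with hM0
  have h3 : 3 ≤ M0 := le_max_left _ _
  have hM : 2 * (n : ℤ) < D + M0 := by
    have := le_max_right 3 (2 * (n : ℤ) - D + 1)
    omega
  -- the finite-dimensional invariant subspace
  set U' : Submodule ℂ V := WW b w n D ⊓ (S : Submodule ℂ V) with hU'
  have hvU' : v ∈ U' := ⟨hvW, (LieSubmodule.mem_toSubmodule S).mpr hvS⟩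
  have hU'inv : ∀ (x : Gp) (u : V), u ∈ U' → ⁅(x : G), u⁆ ∈ U' := by
    intro x u hu
    exact ⟨WW_inv_Gp b Gp φ w hb hGp hwhit x hu.1,
      (LieSubmodule.mem_toSubmodule S).mpr (S.lie_mem ((LieSubmodule.mem_toSubmodule S).mp hu.2))⟩
  haveI hWfd : FiniteDimensional ℂ (WW b w n D) := WW_fd b w n D
  haveI : FiniteDimensional ℂ U' := Submodule.finiteDimensional_of_le inf_le_left
  -- the representation of Gp on U'
  let ρ : Gp →ₗ⁅ℂ⁆ Module.End ℂ U' :=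
    { toFun := fun x => (LieModule.toEnd ℂ G V (x : G)).restrict
        (fun u hu => hU'inv x u hu)
      map_add' := by
        intro x y
        ext u
        simp [LinearMap.restrict_coe_apply, LieModule.toEnd_apply_apply, add_lie]
        rfl
      map_smul' := by
        intro c x
        ext u
        have hcx : ((c • x : Gp) : G) = c • (x : G) := rfl
        simp [LinearMap.restrict_coe_apply, LieModule.toEnd_apply_apply, hcx, smul_lie]
        rfl
      map_lie' := by
        intro x y
        ext u
        simp only [Ring.lie_def, LinearMap.sub_apply, Module.End.mul_apply,
          LinearMap.restrict_coe_apply, LieModule.toEnd_apply_apply,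
          AddSubgroupClass.coe_sub, LieSubalgebra.coe_bracket]
        rw [lie_lie]
        rfl }
  have hρ_apply : ∀ (x : Gp) (u : U'), ((ρ x u : U') : V) = ⁅(x : G), (u : V)⁆ := by
    intro x u
    simp [ρ, LinearMap.restrict_coe_apply, LieModule.toEnd_apply_apply]
    rfl
  let R : LieSubalgebra ℂ (Module.End ℂ U') := ρ.range
  -- R is finite dimensional
  let eqv : R ≃ₗ[ℂ] (R : Submodule ℂ (Module.End ℂ U')) :=
    { toFun := fun z => ⟨z.1, z.2⟩
      invFun := fun z => ⟨z.1, z.2⟩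
      map_add' := fun _ _ => rfl
      map_smul' := fun _ _ => rfl
      left_inv := fun _ => rfl
      right_inv := fun _ => rfl }
  haveI : FiniteDimensional ℂ (R : Submodule ℂ (Module.End ℂ U')) := by infer_instance
  haveI hRfd : FiniteDimensional ℂ R := Module.Finite.equiv eqv.symm
  -- R is nilpotent
  haveI hRnil : LieRing.IsNilpotent R := by
    rw [LieAlgebra.isNilpotent_iff_forall (R := ℂ)]
    intro z
    obtain ⟨x, hxz⟩ := (LieHom.mem_range (f := ρ) _).mp z.2
    set m0 : ℕ := (M0 - 1).toNat with hm0def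
    have hm0 : (m0 : ℤ) = M0 - 1 := Int.toNat_of_nonneg (by omega)
    refine ⟨m0, ?_⟩
    have step : ∀ (j : ℕ) (u : Gp),
        ((LieAlgebra.ad ℂ R z) ^ j) ⟨ρ u, ρ.mem_range_self u⟩ =
          ⟨ρ (((LieAlgebra.ad ℂ Gp x) ^ j) u), ρ.mem_range_self _⟩ := by
      intro j
      induction j with
      | zero => intro u; simp
      | succ j ih =>
        intro u
        rw [pow_succ, Module.End.mul_apply]
        have h1 : (LieAlgebra.ad ℂ R z) ⟨ρ u, ρ.mem_range_self u⟩ =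
            ⟨ρ ⁅x, u⁆, ρ.mem_range_self _⟩ := by
          apply Subtype.ext
          rw [LieAlgebra.ad_apply, LieSubalgebra.coe_bracket]
          show ⁅(z : Module.End ℂ U'), ρ u⁆ = ρ ⁅x, u⁆
          rw [← hxz, ← ρ.map_lie]
        have h2 : ((LieAlgebra.ad ℂ Gp x) ^ j) ⁅x, u⁆ =
            ((LieAlgebra.ad ℂ Gp x) ^ (j + 1)) u := by
          rw [pow_succ, Module.End.mul_apply, LieAlgebra.ad_apply]
        rw [h1, ih ⁅x, u⁆]
        exact Subtype.ext (congrArg (fun t => (ρ t : Module.End ℂ U')) h2)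
    have hdeg : ∀ (j : ℕ) (u : Gp),
        ((((LieAlgebra.ad ℂ Gp x) ^ j) u : Gp) : G) ∈ Pf b (1 + j) := by
      intro j
      induction j with
      | zero =>
        intro u
        simp only [pow_zero, Module.End.one_apply]
        have : (u : G) ∈ Submodule.span ℂ (pgcaPosSet b) := by rw [← hGp]; exact u.2
        rwa [posSet_eq] at this
      | succ j ih =>
        intro u
        rw [pow_succ', Module.End.mul_apply, LieAlgebra.ad_apply, LieSubalgebra.coe_bracket]
        have hx1 : (x : G) ∈ Pf b 1 := by
          have : (x : G) ∈ Submodule.span ℂ (pgcaPosSet b) := by rw [← hGp]; exact x.2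
          rwa [posSet_eq] at this
        have := lie_Pf b hb hx1 (ih u)
        have he : (1 : ℤ) + (1 + (j : ℤ)) = 1 + (((j + 1 : ℕ)) : ℤ) := by push_cast; ring
        rwa [← he]

    apply LinearMap.ext
    intro y
    obtain ⟨x', hx'⟩ := (LieHom.mem_range (f := ρ) _).mp y.2
    have hy : y = ⟨ρ x', ρ.mem_range_self x'⟩ := Subtype.ext hx'.symm
    rw [hy, step m0 x']
    have hmem : ((((LieAlgebra.ad ℂ Gp x) ^ m0) x' : Gp) : G) ∈ Pf b M0 :=
      Pf_antitone b (by omega) (hdeg m0 x')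
    have hkillρ : ρ (((LieAlgebra.ad ℂ Gp x) ^ m0) x') = 0 := by
      apply LinearMap.ext
      intro u
      apply Subtype.ext
      rw [hρ_apply]
      have := kill b Gp φ w hb hGp hwhit h3 hM _ hmem (u : V) u.2.1
      simpa using this
    apply Subtype.ext
    simp [hkillρ]
  -- find an eigenvector in U'
  haveI : Nontrivial U' := nontrivial_of_ne ⟨v, hvU'⟩ 0
    (fun h => hv0 (by simpa [Subtype.ext_iff] using h))
  obtain ⟨χ, hχ⟩ : ∃ χ : R → ℂ, LieModule.genWeightSpace U' χ ≠ ⊥ := by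
    by_contra hcon
    push_neg at hcon
    have htop := LieModule.iSup_genWeightSpace_eq_top ℂ R U'
    have hbot : (⨆ χ : R → ℂ, LieModule.genWeightSpace (↥U') χ) = ⊥ := by
      simp only [hcon, iSup_bot]
    rw [hbot] at htop
    have hv' : (⟨v, hvU'⟩ : U') ∈ (⊥ : LieSubmodule ℂ R U') :=
      htop.symm ▸ LieSubmodule.mem_top _
    rw [LieSubmodule.mem_bot] at hv'
    exact hv0 (by simpa [Subtype.ext_iff] using hv')
  obtain ⟨mvec, hm0, hkey⟩ := LieModule.exists_forall_lie_eq_smul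
    ℂ R U' (⟨χ, hχ⟩ : LieModule.Weight ℂ R U')
  set χW : LieModule.Weight ℂ R U' := ⟨χ, hχ⟩
  have hsm : Function.Injective fun c : ℂ => c • mvec := smul_left_injective ℂ hm0
  have hadd : ∀ z1 z2 : R, χW (z1 + z2) = χW z1 + χW z2 := by
    intro z1 z2
    apply hsm
    show χW (z1 + z2) • mvec = (χW z1 + χW z2) • mvec
    rw [← hkey, add_lie, hkey, hkey, add_smul]
  have hsmul : ∀ (c : ℂ) (z : R), χW (c • z) = c * χW z := by
    intro c z
    apply hsm
    show χW (c • z) • mvec = (c * χW z) • mvec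
    rw [← hkey, smul_lie, hkey, smul_smul]
  have hlie : ∀ z1 z2 : R, χW ⁅z1, z2⁆ = 0 := by
    intro z1 z2
    apply hsm
    show χW ⁅z1, z2⁆ • mvec = (0 : ℂ) • mvec
    rw [← hkey, lie_lie, hkey, hkey, lie_smul, lie_smul, hkey, hkey, zero_smul,
      smul_smul, smul_smul, mul_comm, sub_self]
  let zmk : Gp → R := fun x => ⟨ρ x, ρ.mem_range_self x⟩
  have zmk_add : ∀ x y : Gp, zmk (x + y) = zmk x + zmk y :=
    fun x y => Subtype.ext (ρ.map_add x y)
  have zmk_smul : ∀ (c : ℂ) (x : Gp), zmk (c • x) = c • zmk x :=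
    fun c x => Subtype.ext (ρ.map_smul c x)
  have zmk_lie : ∀ x y : Gp, zmk ⁅x, y⁆ = ⁅zmk x, zmk y⁆ :=
    fun x y => Subtype.ext (by rw [LieSubalgebra.coe_bracket]; exact ρ.map_lie x y)
  let ψ : Gp →ₗ⁅ℂ⁆ ℂ :=
    { toFun := fun x => χW (zmk x)
      map_add' := fun x y => by
        show χW (zmk (x + y)) = χW (zmk x) + χW (zmk y)
        rw [zmk_add, hadd]
      map_smul' := fun c x => by
        show χW (zmk (c • x)) = c • χW (zmk x)
        rw [zmk_smul, hsmul]
        rfl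
      map_lie' := fun {x y} => by
        show χW (zmk ⁅x, y⁆) = ⁅χW (zmk x), χW (zmk y)⁆
        rw [zmk_lie, hlie, lie_complex] }
  refine ⟨(mvec : V), ?_, ?_, ψ, ?_⟩
  · exact (LieSubmodule.mem_toSubmodule S).mp mvec.2.2
  · intro h
    exact hm0 (Subtype.ext h)
  · intro x
    have := hkey (zmk x)
    have hc := congrArg Subtype.val this
    rw [LieSubalgebra.coe_bracket_of_module] at hc
    rw [Module.End.lie_apply] at hc
    show ⁅(x : G), (mvec : V)⁆ = ψ x • (mvec : V)
    rw [← hρ_apply x mvec]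
    exact hc.trans rfl
end
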